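/- arXiv:1601.01041 — 4 statements merged into one kernel-verified Lean document; each statement's English description precedes it below -/
import Mathlib

section
/- If a graph G has β cycles where β is an infinite cardinal, then the forest graph F(G) is β-regular: every vertex of F(G) has degree β. -/
open Cardinal

variable {V : Type*}

/-- `F` is a maximal forest of `G`: an acyclic subgraph of `G` maximal among
acyclic subgraphs of `G` under inclusion. -/
def IsMaximalForest (G F : SimpleGraph V) : Prop :=
  F ≤ G ∧ F.IsAcyclic ∧ ∀ F' : SimpleGraph V, F' ≤ G → F'.IsAcyclic → F ≤ F' → F' = F

/-- The forest graph of `G`: vertices are the maximal forests of `G`,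
two adjacent iff they differ by exactly one edge. -/
def forestGraph (G : SimpleGraph V) :
    SimpleGraph {F : SimpleGraph V // IsMaximalForest G F} where
  Adj F₁ F₂ := (F₁.1.edgeSet \ F₂.1.edgeSet).encard = 1 ∧
               (F₂.1.edgeSet \ F₁.1.edgeSet).encard = 1
  symm := ⟨fun F₁ F₂ h => ⟨h.2, h.1⟩⟩
  loopless := ⟨fun F h => by simp at h⟩

/-- The set of cycles of `G`, each cycle identified with its edge set. -/
def cycleSet (G : SimpleGraph V) : Set (Set (Sym2 V)) :=
  {s | ∃ (v : V) (c : G.Walk v v), c.IsCycle ∧ s = {e | e ∈ c.edges}}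

universe u





namespace ForestAux

open SimpleGraph

variable {W : Type u} {G F N : SimpleGraph W}

lemma reachable_lift (h : ∀ x y : W, F.Adj x y → N.Reachable x y) {x y : W}
    (hr : F.Reachable x y) : N.Reachable x y := by
  obtain ⟨w⟩ := hr
  induction w with
  | nil => exact Reachable.refl _
  | cons ha p ih => exact (h _ _ ha).trans ih

lemma acyclic_of_le (hle : N ≤ F) (hF : F.IsAcyclic) : N.IsAcyclic := by
  intro v c hc
  exact hF (c.mapLe hle) (hc.mapLe hle)

lemma sup_edge_acyclic (hF : F.IsAcyclic) {x y : W} (hr : ¬F.Reachable x y) :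
    (F ⊔ fromEdgeSet {s(x, y)}).IsAcyclic := by
  intro v c hc
  by_cases he : s(x, y) ∈ c.edges
  · have h2 := (adj_and_reachable_delete_edges_iff_exists_cycle.mpr ⟨v, c, hc, he⟩).2
    have hle : (F ⊔ fromEdgeSet {s(x, y)}) \ fromEdgeSet {s(x, y)} ≤ F := by
      rw [← edgeSet_subset_edgeSet, edgeSet_sdiff, edgeSet_sup]
      rintro a ⟨h1 | h1, h2⟩
      · exact h1
      · exact absurd h1 h2
    exact hr (h2.mono hle)
  · have hsub : ∀ a ∈ c.edges, a ∈ F.edgeSet := by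
      intro a ha
      have h1 : a ∈ (F ⊔ fromEdgeSet {s(x, y)}).edgeSet := c.edges_subset_edgeSet ha
      rw [edgeSet_sup, edgeSet_fromEdgeSet] at h1
      rcases h1 with h1 | h1
      · exact h1
      · rw [Set.mem_diff, Set.mem_singleton_iff] at h1
        exact absurd (h1.1 ▸ ha) he
    exact hF (c.transfer F hsub) (hc.transfer hsub)

lemma maximal_reachable (hF : IsMaximalForest G F) {x y : W}
    (h : G.Adj x y) : F.Reachable x y := by
  by_contra hr
  have hac := sup_edge_acyclic hF.2.1 hr
  have hle : F ⊔ fromEdgeSet {s(x, y)} ≤ G := by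
    refine sup_le hF.1 ?_
    intro a b hab
    rw [fromEdgeSet_adj, Set.mem_singleton_iff, Sym2.eq_iff] at hab
    rcases hab.1 with ⟨rfl, rfl⟩ | ⟨rfl, rfl⟩
    · exact h
    · exact h.symm
  have heq := hF.2.2 _ hle hac le_sup_left
  apply hr
  have hadj : (F ⊔ fromEdgeSet {s(x, y)}).Adj x y :=
    Or.inr ((fromEdgeSet_adj _).mpr ⟨rfl, h.ne⟩)
  rw [heq] at hadj
  exact hadj.reachable

lemma isMaximalForest_of (h1 : F ≤ G) (h2 : F.IsAcyclic)
    (h3 : ∀ x y : W, G.Adj x y → F.Reachable x y) : IsMaximalForest G F := by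
  classical
  refine ⟨h1, h2, fun F' hF'G hF'ac hFF' => ?_⟩
  refine le_antisymm ?_ hFF'
  intro a b hab
  by_contra hFab
  obtain ⟨w⟩ := h3 a b (hF'G hab)
  have hp : w.bypass.IsPath := w.bypass_isPath
  have hsub : ∀ x ∈ w.bypass.edges, x ∈ F'.edgeSet := fun x hx =>
    edgeSet_subset_edgeSet.mpr hFF' (w.bypass.edges_subset_edgeSet hx)
  have hne : s(b, a) ∉ (w.bypass.transfer F' hsub).edges := by
    rw [Walk.edges_transfer]
    intro hmem
    have hF' : s(b, a) ∈ F.edgeSet := w.bypass.edges_subset_edgeSet hmem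
    rw [Sym2.eq_swap, mem_edgeSet] at hF'
    exact hFab hF'
  exact hF'ac _ (Path.cons_isCycle ⟨w.bypass.transfer F' hsub, hp.transfer hsub⟩ hab.symm hne)

lemma cycle_delete_reachable {v a b : W} (c : G.Walk v v) (hc : c.IsCycle)
    (hf : s(a, b) ∈ c.edges) :
    (fromEdgeSet {x | x ∈ c.edges} \ fromEdgeSet {s(a, b)}).Reachable a b := by
  have hsub : ∀ x ∈ c.edges, x ∈ (fromEdgeSet {x | x ∈ c.edges} : SimpleGraph W).edgeSet := by
    intro x hx
    rw [edgeSet_fromEdgeSet]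
    exact ⟨hx, G.not_isDiag_of_mem_edgeSet (c.edges_subset_edgeSet hx)⟩
  have hmem : s(a, b) ∈ (c.transfer _ hsub).edges := by
    rw [Walk.edges_transfer]; exact hf
  exact (adj_and_reachable_delete_edges_iff_exists_cycle.mpr
    ⟨v, c.transfer _ hsub, hc.transfer hsub, hmem⟩).2

end ForestAux

namespace ForestAux

open SimpleGraph

variable {W : Type u} {G F : SimpleGraph W}

/-- `f` separates `u` from `v` in `F`: every `F`-walk from `u` to `v` uses `f`. -/
def Sep (F : SimpleGraph W) (f : Sym2 W) (u v : W) : Prop :=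
  ∀ q : F.Walk u v, f ∈ q.edges

lemma Sep.symm {f : Sym2 W} {u v : W} (h : Sep F f u v) : Sep F f v u := fun q => by
  have h2 := h q.reverse
  rwa [Walk.edges_reverse, List.mem_reverse] at h2

lemma sep_congr {f : Sym2 W} {u v u' v' : W} (h : Sep F f u v)
    (he : s(u, v) = s(u', v')) : Sep F f u' v' := by
  rw [Sym2.eq_iff] at he
  rcases he with ⟨h1, h2⟩ | ⟨h1, h2⟩
  · subst h1; subst h2; exact h
  · subst h1; subst h2; exact h.symm

lemma sep_iff_not_reachable (f : Sym2 W) (u v : W) :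
    Sep F f u v ↔ ¬(F \ fromEdgeSet {f}).Reachable u v := by
  constructor
  · rintro h ⟨q⟩
    have hsub : ∀ x ∈ q.edges, x ∈ F.edgeSet := by
      intro x hx
      have h2 := q.edges_subset_edgeSet hx
      rw [edgeSet_sdiff] at h2; exact h2.1
    have hf := h (q.transfer F hsub)
    rw [Walk.edges_transfer] at hf
    have h3 := q.edges_subset_edgeSet hf
    rw [edgeSet_sdiff, edgeSet_fromEdgeSet] at h3
    exact h3.2 ⟨rfl, F.not_isDiag_of_mem_edgeSet (hsub _ hf)⟩
  · intro h q
    by_contra hf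
    apply h
    have hsub : ∀ x ∈ q.edges, x ∈ (F \ fromEdgeSet {f}).edgeSet := by
      intro x hx
      rw [edgeSet_sdiff, edgeSet_fromEdgeSet]
      refine ⟨q.edges_subset_edgeSet hx, ?_⟩
      rintro ⟨hx1, -⟩
      rw [Set.mem_singleton_iff] at hx1
      exact hf (hx1 ▸ hx)
    exact ⟨q.transfer _ hsub⟩

/-- A choice of ordered pair of endpoints for an element of `Sym2 W`. -/
lemma pick_ex (e : Sym2 W) : ∃ p : W × W, s(p.1, p.2) = e :=
  Sym2.inductionOn e fun x y => ⟨(x, y), rfl⟩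

noncomputable def pickP (e : Sym2 W) : W × W :=
  Classical.choose (pick_ex e)

lemma pickP_spec (e : Sym2 W) : s((pickP e).1, (pickP e).2) = e :=
  Classical.choose_spec (pick_ex e)


lemma pick_adj {e : Sym2 W} (he : e ∈ G.edgeSet) : G.Adj (pickP e).1 (pickP e).2 :=
  G.mem_edgeSet.mp (by rw [pickP_spec]; exact he)

/-- The chosen fundamental path in `F` between the chosen endpoints of an edge of `G`. -/
noncomputable def fpath (hF : IsMaximalForest G F) {e : Sym2 W} (he : e ∈ G.edgeSet) :
    F.Walk (pickP e).1 (pickP e).2 :=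
  letI := Classical.decEq W
  (maximal_reachable hF (pick_adj he)).some.bypass

lemma fpath_isPath (hF : IsMaximalForest G F) {e : Sym2 W} (he : e ∈ G.edgeSet) :
    (fpath hF he).IsPath := by
  letI := Classical.decEq W
  exact Walk.bypass_isPath _

/-- The finite set of candidate exchange edges associated to an edge `e`. -/
noncomputable def phi (hF : IsMaximalForest G F) {e : Sym2 W} (he : e ∈ G.edgeSet) :
    Set (Sym2 W) :=
  insert e {x | x ∈ (fpath hF he).edges}

lemma phi_finite (hF : IsMaximalForest G F) {e : Sym2 W} (he : e ∈ G.edgeSet) :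
    (phi hF he).Finite :=
  (List.finite_toSet _).insert e

lemma mem_phi_self (hF : IsMaximalForest G F) {e : Sym2 W} (he : e ∈ G.edgeSet) :
    e ∈ phi hF he := Set.mem_insert _ _

lemma mem_phi_of_sep (hF : IsMaximalForest G F) {e : Sym2 W} (he : e ∈ G.edgeSet)
    {u v : W} (huv : s(u, v) = e) {f : Sym2 W} (hsep : Sep F f u v) : f ∈ phi hF he := by
  have h2 : Sep F f (pickP e).1 (pickP e).2 :=
    sep_congr hsep (huv.trans (pickP_spec e).symm)
  exact Set.mem_insert_of_mem _ (h2 (fpath hF he))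

lemma sep_of_mem_fpath (hF : IsMaximalForest G F) {e : Sym2 W} (he : e ∈ G.edgeSet)
    {f : Sym2 W} (hf : f ∈ (fpath hF he).edges) {u v : W} (huv : s(u, v) = e) :
    Sep F f u v := by
  classical
  have key : Sep F f (pickP e).1 (pickP e).2 := by
    intro q
    have hq : (⟨q.bypass, q.bypass_isPath⟩ : F.Path _ _) = ⟨fpath hF he, fpath_isPath hF he⟩ :=
      isAcyclic_iff_path_unique.mp hF.2.1 _ _
    have hq' : q.bypass = fpath hF he := congrArg Subtype.val hq
    exact q.edges_bypass_subset (hq' ▸ hf : f ∈ q.bypass.edges)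
  exact sep_congr key ((pickP_spec e).trans huv.symm)

lemma exists_mem_edges_of_ne {H : SimpleGraph W} {u v : W} (q : H.Walk u v) (h : u ≠ v) :
    ∃ f, f ∈ q.edges := by
  cases q with
  | nil => exact absurd rfl h
  | cons ha p => exact ⟨_, by rw [Walk.edges_cons]; exact List.mem_cons_self⟩

end ForestAux

namespace ForestAux

open SimpleGraph

variable {W : Type u} {G F : SimpleGraph W}

/-- The fundamental cycle of an edge `e ∈ G \ F`. -/
lemma fcycle (hF : IsMaximalForest G F) {e : Sym2 W} (heG : e ∈ G.edgeSet)
    (heF : e ∉ F.edgeSet) :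
    ∃ (v : W) (c : G.Walk v v), c.IsCycle ∧
      {x | x ∈ c.edges} = insert e {x | x ∈ (fpath hF heG).edges} := by
  have hsubG : ∀ x ∈ (fpath hF heG).edges, x ∈ G.edgeSet := fun x hx =>
    edgeSet_subset_edgeSet.mpr hF.1 ((fpath hF heG).edges_subset_edgeSet hx)
  set p : G.Walk (pickP e).1 (pickP e).2 := (fpath hF heG).transfer G hsubG with hp
  have hpp : p.IsPath := (fpath_isPath hF heG).transfer hsubG
  have hadj : G.Adj (pickP e).2 (pickP e).1 := (pick_adj heG).symm
  have hne : s((pickP e).2, (pickP e).1) ∉ p.edges := by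
    rw [hp, Walk.edges_transfer]
    intro hmem
    have h1 : s((pickP e).2, (pickP e).1) ∈ F.edgeSet :=
      (fpath hF heG).edges_subset_edgeSet hmem
    rw [Sym2.eq_swap, pickP_spec] at h1
    exact heF h1
  refine ⟨(pickP e).2, Walk.cons hadj p, Path.cons_isCycle ⟨p, hpp⟩ hadj hne, ?_⟩
  ext x
  simp only [Set.mem_setOf_eq, Walk.edges_cons, List.mem_cons, Set.mem_insert_iff]
  rw [hp, Walk.edges_transfer]
  constructor
  · rintro (h | h)
    · left; rw [h, Sym2.eq_swap, pickP_spec]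
    · right; exact h
  · rintro (h | h)
    · left; rw [h, Sym2.eq_swap, pickP_spec]
    · right; exact h

/-- Every `F`-edge of a cycle of `G` lies in `phi e` for some non-forest edge `e`
of that cycle. -/
lemma exists_phi_of_mem_cycle (hF : IsMaximalForest G F) {v : W} (c : G.Walk v v)
    (hc : c.IsCycle) {f : Sym2 W} (hfF : f ∈ F.edgeSet) (hfc : f ∈ c.edges) :
    ∃ (e : Sym2 W) (heG : e ∈ G.edgeSet),
      e ∈ c.edges ∧ e ∉ F.edgeSet ∧ f ∈ phi hF heG := by
  obtain ⟨a, b, rfl⟩ : ∃ a b, f = s(a, b) := ⟨_, _, (pickP_spec f).symm⟩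
  have hreach := cycle_delete_reachable c hc hfc
  set A : Set W := {w | (F \ fromEdgeSet {s(a, b)}).Reachable w a} with hA
  have haA : a ∈ A := Reachable.refl a
  have hbA : b ∉ A := by
    intro hb
    have hadj : F.Adj a b := F.mem_edgeSet.mp hfF
    have hbridge := isAcyclic_iff_forall_adj_isBridge.mp hF.2.1 hadj
    rw [isBridge_iff] at hbridge
    exact hbridge hb.symm
  obtain ⟨q⟩ := hreach
  obtain ⟨d, hd, hdA, hdA'⟩ := q.exists_boundary_dart A haA hbA
  have hedge : d.edge = s(d.fst, d.snd) := rfl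
  have hedge_mem : d.edge ∈ (fromEdgeSet {x | x ∈ c.edges} \ fromEdgeSet {s(a, b)}).edgeSet :=
    d.edge_mem
  rw [edgeSet_sdiff, edgeSet_fromEdgeSet, edgeSet_fromEdgeSet] at hedge_mem
  have heC : d.edge ∈ c.edges := hedge_mem.1.1
  have heG : d.edge ∈ G.edgeSet := c.edges_subset_edgeSet heC
  have hnd : ¬d.edge.IsDiag := G.not_isDiag_of_mem_edgeSet heG
  have hne_f : d.edge ≠ s(a, b) := by
    intro h
    exact hedge_mem.2 ⟨h, hnd⟩
  have heF : d.edge ∉ F.edgeSet := by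
    intro hFe
    apply hdA'
    have hadj2 : (F \ fromEdgeSet {s(a, b)}).Adj d.snd d.fst := by
      rw [sdiff_adj]
      constructor
      · exact (F.mem_edgeSet.mp (hedge ▸ hFe)).symm
      · rw [fromEdgeSet_adj]
        rintro ⟨h1, -⟩
        rw [Set.mem_singleton_iff] at h1
        exact hne_f (by rw [hedge, Sym2.eq_swap]; exact h1)
    exact hadj2.reachable.trans hdA
  have hsep : Sep F s(a, b) d.fst d.snd := by
    rw [sep_iff_not_reachable]
    intro hr
    exact hdA' (hr.symm.trans hdA)
  exact ⟨d.edge, heG, heC, heF, mem_phi_of_sep hF heG hedge.symm hsep⟩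

end ForestAux

namespace ForestAux

open SimpleGraph

variable {W : Type u} {G F : SimpleGraph W}

lemma nbr_spec (hF : IsMaximalForest G F) {e : Sym2 W} (heG : e ∈ G.edgeSet)
    (heF : e ∉ F.edgeSet) {f : Sym2 W} (hf : f ∈ (fpath hF heG).edges) :
    ∃ N : SimpleGraph W, IsMaximalForest G N ∧
      N.edgeSet \ F.edgeSet = {e} ∧ F.edgeSet \ N.edgeSet = {f} := by
  classical
  have hfF : f ∈ F.edgeSet := (fpath hF heG).edges_subset_edgeSet hf
  have hfe : f ≠ e := fun h => heF (h ▸ hfF)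
  have hfnd : ¬f.IsDiag := F.not_isDiag_of_mem_edgeSet hfF
  have hend : ¬e.IsDiag := G.not_isDiag_of_mem_edgeSet heG
  set S : Set (Sym2 W) := (F.edgeSet \ {f}) ∪ {e} with hS
  set N : SimpleGraph W := fromEdgeSet S with hN
  have hSsub : S ⊆ G.edgeSet := by
    rintro x (⟨hx1, -⟩ | hx)
    · exact edgeSet_subset_edgeSet.mpr hF.1 hx1
    · rw [Set.mem_singleton_iff] at hx; exact hx ▸ heG
  have hNedge : N.edgeSet = S := by
    rw [hN, edgeSet_fromEdgeSet]
    ext x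
    constructor
    · rintro ⟨h1, -⟩; exact h1
    · intro h1
      exact ⟨h1, G.not_isDiag_of_mem_edgeSet (hSsub h1)⟩
  have hNG : N ≤ G := by
    rw [← edgeSet_subset_edgeSet, hNedge]; exact hSsub
  -- acyclicity
  have hsep0 : Sep F f (pickP e).1 (pickP e).2 := sep_of_mem_fpath hF heG hf (pickP_spec e)
  have hnr : ¬(F \ fromEdgeSet {f}).Reachable (pickP e).1 (pickP e).2 :=
    (sep_iff_not_reachable f _ _).mp hsep0
  have hK := sup_edge_acyclic (acyclic_of_le sdiff_le hF.2.1) hnr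
  have hsingle_f : ({f} : Set (Sym2 W)) \ {x : Sym2 W | x.IsDiag} = {f} := by
    ext x
    simp only [Set.mem_diff, Set.mem_singleton_iff, Set.mem_setOf_eq]
    exact ⟨fun h => h.1, fun h => ⟨h, h ▸ hfnd⟩⟩
  have hsingle_e : ({e} : Set (Sym2 W)) \ {x : Sym2 W | x.IsDiag} = {e} := by
    ext x
    simp only [Set.mem_diff, Set.mem_singleton_iff, Set.mem_setOf_eq]
    exact ⟨fun h => h.1, fun h => ⟨h, h ▸ hend⟩⟩
  have hNeq : N = (F \ fromEdgeSet {f}) ⊔ fromEdgeSet {s((pickP e).1, (pickP e).2)} := by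
    rw [← edgeSet_inj, hNedge, edgeSet_sup, edgeSet_sdiff, edgeSet_fromEdgeSet,
      edgeSet_fromEdgeSet, pickP_spec, Sym2.diagSet_eq_setOf_isDiag, hsingle_f, hsingle_e]
  have hNac : N.IsAcyclic := by rw [hNeq]; exact hK
  -- maximality
  have hFN : ∀ x y : W, F.Adj x y → N.Reachable x y := by
    intro x y hxy
    by_cases hxf : s(x, y) = f
    · obtain ⟨vc, c, hc, hcE⟩ := fcycle hF heG heF
      have hfc : f ∈ c.edges := by
        have : f ∈ {x | x ∈ c.edges} := by
          rw [hcE]; exact Set.mem_insert_of_mem _ hf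
        exact this
      obtain ⟨d, hd, hde⟩ : ∃ d : F.Dart, d ∈ (fpath hF heG).darts ∧ d.edge = f := by
        obtain ⟨d, hd1, hd2⟩ := List.mem_map.mp (show f ∈ (fpath hF heG).darts.map Dart.edge from hf)
        exact ⟨d, hd1, hd2⟩
      have hfc' : s(d.fst, d.snd) ∈ c.edges := by rw [show s(d.fst, d.snd) = f from hde]; exact hfc
      have hrc := cycle_delete_reachable c hc hfc'
      have hle' : fromEdgeSet {x | x ∈ c.edges} \ fromEdgeSet {s(d.fst, d.snd)} ≤ N := by
        rw [← edgeSet_subset_edgeSet, edgeSet_sdiff, edgeSet_fromEdgeSet, edgeSet_fromEdgeSet,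
          hNedge]
        rintro z ⟨⟨hz1, hz2⟩, hz3⟩
        rw [hcE] at hz1
        have hzf : z ≠ f := by
          intro h
          exact hz3 ⟨by rw [Set.mem_singleton_iff, h, ← hde]; rfl, h ▸ hfnd⟩
        rcases hz1 with hz1 | hz1
        · right; exact hz1
        · left
          exact ⟨(fpath hF heG).edges_subset_edgeSet hz1, hzf⟩
      have hreachN : N.Reachable d.fst d.snd := hrc.mono hle'
      have hxy' : s(x, y) = s(d.fst, d.snd) := by rw [hxf, ← hde]; rfl
      rw [Sym2.eq_iff] at hxy'
      rcases hxy' with ⟨h1, h2⟩ | ⟨h1, h2⟩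
      · rw [h1, h2]; exact hreachN
      · rw [h1, h2]; exact hreachN.symm
    · have : N.Adj x y := by
        rw [hN, fromEdgeSet_adj]
        exact ⟨Or.inl ⟨F.mem_edgeSet.mpr hxy, hxf⟩, hxy.ne⟩
      exact this.reachable
  have hNmax : IsMaximalForest G N :=
    isMaximalForest_of hNG hNac fun x y h =>
      reachable_lift hFN (maximal_reachable hF h)
  refine ⟨N, hNmax, ?_, ?_⟩
  · rw [hNedge]
    ext x
    simp only [Set.mem_diff, Set.mem_union, Set.mem_singleton_iff]
    constructor
    · rintro ⟨⟨hx1, -⟩ | hx1, hx2⟩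
      · exact absurd hx1 hx2
      · exact hx1
    · rintro rfl
      exact ⟨Or.inr rfl, heF⟩
  · rw [hNedge]
    ext x
    constructor
    · rintro ⟨hx1, hx2⟩
      by_contra hxf
      exact hx2 (Or.inl ⟨hx1, hxf⟩)
    · rintro rfl
      refine ⟨hfF, ?_⟩
      rintro (⟨-, h2⟩ | h2)
      · exact h2 rfl
      · exact hfe h2
  
end ForestAux

namespace ForestAux

open SimpleGraph

variable {W : Type u} {G F : SimpleGraph W}

lemma neighbor_decomp (hF : IsMaximalForest G F) {N : SimpleGraph W}
    (hN : IsMaximalForest G N) {e f : Sym2 W}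
    (hNF : N.edgeSet \ F.edgeSet = {e}) (hFN : F.edgeSet \ N.edgeSet = {f}) :
    ∃ heG : e ∈ G.edgeSet, e ∉ F.edgeSet ∧ f ∈ phi hF heG ∧
      N.edgeSet = (F.edgeSet \ {f}) ∪ {e} := by
  classical
  have he : e ∈ N.edgeSet \ F.edgeSet := hNF ▸ rfl
  have hfm : f ∈ F.edgeSet \ N.edgeSet := hFN ▸ rfl
  have heG : e ∈ G.edgeSet := edgeSet_subset_edgeSet.mpr hN.1 he.1
  have hsub : F.edgeSet \ {f} ⊆ N.edgeSet := by
    rintro x ⟨hx1, hx2⟩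
    by_contra hxN
    exact hx2 (hFN ▸ (⟨hx1, hxN⟩ : x ∈ F.edgeSet \ N.edgeSet))
  have hsep : Sep F f (pickP e).1 (pickP e).2 := by
    intro q
    by_contra hfq
    have hqsub : ∀ x ∈ q.edges, x ∈ N.edgeSet := fun x hx =>
      hsub ⟨q.edges_subset_edgeSet hx, fun hxf => hfq (hxf ▸ hx)⟩
    have hNadj : N.Adj (pickP e).2 (pickP e).1 :=
      (N.mem_edgeSet.mp (by rw [pickP_spec]; exact he.1)).symm
    have hnotin : s((pickP e).2, (pickP e).1) ∉ (q.transfer N hqsub).bypass.edges := by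
      intro hmem
      have h1 : s((pickP e).2, (pickP e).1) ∈ (q.transfer N hqsub).edges :=
        (q.transfer N hqsub).edges_bypass_subset hmem
      rw [Walk.edges_transfer] at h1
      have h2 := q.edges_subset_edgeSet h1
      rw [Sym2.eq_swap, pickP_spec] at h2
      exact he.2 h2
    exact hN.2.1 _
      (Path.cons_isCycle ⟨(q.transfer N hqsub).bypass, Walk.bypass_isPath _⟩ hNadj hnotin)
  refine ⟨heG, he.2, mem_phi_of_sep hF heG (pickP_spec e) hsep, ?_⟩
  ext x
  constructor
  · intro hx
    by_cases hxF : x ∈ F.edgeSet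
    · left
      refine ⟨hxF, fun hxf => ?_⟩
      rw [Set.mem_singleton_iff] at hxf
      exact hfm.2 (hxf ▸ hx)
    · right
      have : x ∈ N.edgeSet \ F.edgeSet := ⟨hx, hxF⟩
      rw [hNF] at this
      exact this
  · rintro (hx | hx)
    · exact hsub hx
    · rw [Set.mem_singleton_iff] at hx
      exact hx ▸ he.1

end ForestAux


/-- If `G` has `β` cycles, `β` infinite, then the forest graph of `G` is `β`-regular. -/
theorem forestGraph_regular {W : Type u} (G : SimpleGraph W) (β : Cardinal.{u}) (hβ : ℵ₀ ≤ β)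
    (hc : #(cycleSet G) = β) :
    ∀ F : {F : SimpleGraph W // IsMaximalForest G F},
      #((forestGraph G).neighborSet F) = β := by
  classical
  intro F
  have hF : IsMaximalForest G F.1 := F.2
  set D : Set (Sym2 W) := G.edgeSet \ F.1.edgeSet with hD
  -- Step A : #D ≤ β via fundamental cycles
  have keyA : ∀ e : ↥D, ∃ s : ↥(cycleSet G), s.1 ∩ D = {e.1} := by
    rintro ⟨e, heG, heF⟩
    obtain ⟨v, c, hcy, hcE⟩ := ForestAux.fcycle hF heG heF
    refine ⟨⟨{x | x ∈ c.edges}, v, c, hcy, rfl⟩, ?_⟩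
    show ({x | x ∈ c.edges} : Set (Sym2 W)) ∩ D = {e}
    rw [hcE]
    ext x
    simp only [Set.mem_inter_iff, Set.mem_insert_iff, Set.mem_setOf_eq, Set.mem_singleton_iff]
    constructor
    · rintro ⟨hx1 | hx1, hx2⟩
      · exact hx1
      · exact absurd ((ForestAux.fpath hF heG).edges_subset_edgeSet hx1) hx2.2
    · rintro rfl
      exact ⟨Or.inl rfl, heG, heF⟩
  choose cyc hcyc using keyA
  have hA : #↥D ≤ β := by
    rw [← hc]
    apply Cardinal.mk_le_of_injective (f := cyc)
    intro e1 e2 h12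
    apply Subtype.ext
    have h3 : ({e1.1} : Set (Sym2 W)) = {e2.1} := by rw [← hcyc e1, ← hcyc e2, h12]
    exact Set.singleton_eq_singleton_iff.mp h3
  -- basic facts about cycles
  have cyc_fin : ∀ s : ↥(cycleSet G), s.1.Finite ∧ s.1 ⊆ G.edgeSet := by
    rintro ⟨s, hs⟩
    obtain ⟨v, c, hcy, rfl⟩ := hs
    exact ⟨List.finite_toSet _, fun x hx => c.edges_subset_edgeSet hx⟩
  have keyB : ∀ s : ↥(cycleSet G), ∀ x ∈ s.1,
      ∃ e : ↥D, e.1 ∈ s.1 ∧ x ∈ ForestAux.phi hF e.2.1 := by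
    rintro ⟨s, hs⟩ x hx
    obtain ⟨v, c, hcy, rfl⟩ := hs
    by_cases hxD : x ∈ D
    · exact ⟨⟨x, hxD⟩, hx, ForestAux.mem_phi_self hF _⟩
    · have hxG : x ∈ G.edgeSet := c.edges_subset_edgeSet hx
      have hxF : x ∈ F.1.edgeSet := by
        by_contra h; exact hxD ⟨hxG, h⟩
      obtain ⟨e, heG, heC, heF, hphi⟩ := ForestAux.exists_phi_of_mem_cycle hF c hcy hxF hx
      exact ⟨⟨e, heG, heF⟩, heC, hphi⟩
  -- the finite-fiber map θ
  have hθfin : ∀ s : ↥(cycleSet G), ((Subtype.val : ↥D → Sym2 W) ⁻¹' s.1).Finite :=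
    fun s => Set.Finite.preimage Subtype.val_injective.injOn (cyc_fin s).1
  set θ : ↥(cycleSet G) → Finset ↥D := fun s => (hθfin s).toFinset with hθ
  have hfib : ∀ T : Finset ↥D, Finite {s : ↥(cycleSet G) // θ s = T} := by
    intro T
    set U : Set (Sym2 W) := ⋃ e ∈ T, ForestAux.phi hF e.2.1 with hU
    have hUfin : U.Finite :=
      Set.Finite.biUnion T.finite_toSet fun e _ => ForestAux.phi_finite hF e.2.1
    have hcont : ∀ s : {s : ↥(cycleSet G) // θ s = T}, s.1.1 ⊆ U := by
      rintro ⟨s, hsT⟩ x hx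
      obtain ⟨e, hes, hex⟩ := keyB s x hx
      have heT : e ∈ T := by
        rw [← hsT, hθ]
        simp only [Set.Finite.mem_toFinset, Set.mem_preimage]
        exact hes
      exact Set.mem_biUnion heT hex
    haveI : Finite ↥{t : Set (Sym2 W) | t ⊆ U} := hUfin.finite_subsets.to_subtype
    refine Finite.of_injective
      (fun s => (⟨s.1.1, hcont s⟩ : ↥{t : Set (Sym2 W) | t ⊆ U})) ?_
    intro s1 s2 h
    rw [Subtype.mk_eq_mk] at h
    exact Subtype.ext (Subtype.ext h)
  have hcard : #↥(cycleSet G) ≤ #(Finset ↥D) * ℵ₀ := by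
    calc #↥(cycleSet G)
        = #(Σ T : Finset ↥D, {s : ↥(cycleSet G) // θ s = T}) :=
          (Cardinal.mk_congr (Equiv.sigmaFiberEquiv θ)).symm
      _ = Cardinal.sum (fun T : Finset ↥D => #{s : ↥(cycleSet G) // θ s = T}) :=
          Cardinal.mk_sigma _
      _ ≤ Cardinal.sum (fun _ : Finset ↥D => ℵ₀) :=
          Cardinal.sum_le_sum _ _ fun T => by
            haveI := hfib T; exact Cardinal.mk_le_aleph0
      _ = #(Finset ↥D) * ℵ₀ := Cardinal.sum_const' _ _
  haveI hDinf : Infinite ↥D := by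
    by_contra hfin
    rw [not_infinite_iff_finite] at hfin
    haveI := hfin
    haveI : ∀ T : Finset ↥D, Finite {s : ↥(cycleSet G) // θ s = T} := hfib
    haveI := Fintype.ofFinite ↥D
    haveI : Finite (Σ T : Finset ↥D, {s : ↥(cycleSet G) // θ s = T}) := inferInstance
    haveI : Finite ↥(cycleSet G) := Finite.of_equiv _ (Equiv.sigmaFiberEquiv θ)
    have hlt := Cardinal.lt_aleph0_of_finite ↥(cycleSet G)
    rw [hc] at hlt
    exact absurd hβ (not_le.mpr hlt)
  have hB : β ≤ #↥D := by
    calc β = #↥(cycleSet G) := hc.symm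
      _ ≤ #(Finset ↥D) * ℵ₀ := hcard
      _ = #↥D * ℵ₀ := by rw [Cardinal.mk_finset_of_infinite]
      _ = #↥D := Cardinal.mul_eq_left (Cardinal.aleph0_le_mk _) (Cardinal.aleph0_le_mk _)
          Cardinal.aleph0_ne_zero
  have hDcard : #↥D = β := le_antisymm hA hB
  -- lower bound for the neighbor set
  have keyC : ∀ e : ↥D, ∃ N : ↥((forestGraph G).neighborSet F),
      N.1.1.edgeSet \ F.1.edgeSet = {e.1} := by
    rintro ⟨e, heG, heF⟩
    obtain ⟨f, hf⟩ := ForestAux.exists_mem_edges_of_ne (ForestAux.fpath hF heG)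
      (ForestAux.pick_adj heG).ne
    obtain ⟨N, hN, hNF, hFN⟩ := ForestAux.nbr_spec hF heG heF hf
    refine ⟨⟨⟨N, hN⟩, ?_⟩, hNF⟩
    show (forestGraph G).Adj F ⟨N, hN⟩
    exact ⟨by rw [hFN]; exact Set.encard_singleton f, by rw [hNF]; exact Set.encard_singleton e⟩
  choose nb hnb using keyC
  have hCle : #↥D ≤ #↥((forestGraph G).neighborSet F) := by
    apply Cardinal.mk_le_of_injective (f := nb)
    intro e1 e2 h
    apply Subtype.ext
    have h3 : ({e1.1} : Set (Sym2 W)) = {e2.1} := by rw [← hnb e1, ← hnb e2, h]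
    exact Set.singleton_eq_singleton_iff.mp h3
  -- upper bound for the neighbor set
  have keyD : ∀ N : ↥((forestGraph G).neighborSet F),
      ∃ (e : ↥D) (f : Sym2 W), f ∈ ForestAux.phi hF e.2.1 ∧
        N.1.1.edgeSet = (F.1.edgeSet \ {f}) ∪ {e.1} := by
    rintro ⟨⟨N, hN⟩, hadj⟩
    have hadj' : (forestGraph G).Adj F ⟨N, hN⟩ := hadj
    obtain ⟨h1, h2⟩ := hadj'
    obtain ⟨e, heset⟩ := Set.encard_eq_one.mp h2
    obtain ⟨f, hfset⟩ := Set.encard_eq_one.mp h1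
    obtain ⟨heG, heF, hphi, hedge⟩ := ForestAux.neighbor_decomp hF hN heset hfset
    exact ⟨⟨e, heG, heF⟩, f, hphi, hedge⟩
  choose eN fN hfN hNe using keyD
  have hDle2 : #↥((forestGraph G).neighborSet F) ≤ #↥D * ℵ₀ := by
    have hinj : Function.Injective (fun N : ↥((forestGraph G).neighborSet F) =>
        (⟨eN N, ⟨fN N, hfN N⟩⟩ : Σ e : ↥D, ↥(ForestAux.phi hF e.2.1))) := by
      intro N1 N2 h
      have he : eN N1 = eN N2 := congrArg Sigma.fst h
      have hff : fN N1 = fN N2 :=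
        congrArg (fun p : Σ e : ↥D, ↥(ForestAux.phi hF e.2.1) => (p.2.1 : Sym2 W)) h
      have he' : (eN N1).1 = (eN N2).1 := congrArg Subtype.val he
      have hEq : N1.1.1.edgeSet = N2.1.1.edgeSet := by
        rw [hNe N1, hNe N2, he', hff]
      apply Subtype.ext; apply Subtype.ext
      exact SimpleGraph.edgeSet_injective hEq
    calc #↥((forestGraph G).neighborSet F)
        ≤ #(Σ e : ↥D, ↥(ForestAux.phi hF e.2.1)) := Cardinal.mk_le_of_injective hinj
      _ = Cardinal.sum (fun e : ↥D => #↥(ForestAux.phi hF e.2.1)) := Cardinal.mk_sigma _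
      _ ≤ Cardinal.sum (fun _ : ↥D => ℵ₀) := Cardinal.sum_le_sum _ _ fun e => by
            haveI := (ForestAux.phi_finite hF e.2.1).to_subtype
            exact Cardinal.mk_le_aleph0
      _ = #↥D * ℵ₀ := Cardinal.sum_const' _ _
  have hmul : #↥D * ℵ₀ = β := by
    rw [hDcard]
    exact Cardinal.mul_eq_left hβ hβ Cardinal.aleph0_ne_zero
  exact le_antisymm (hDle2.trans_eq hmul) (hDcard ▸ hCle)
end

section
/- If a graph G has β cycles where β is an infinite cardinal, then every connected component of the forest graph F(G) has exactly β vertices, and F(G) has exactly 2^β connected components. -/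
open Cardinal

variable {V : Type*}

namespace ForestAux

open SimpleGraph Walk

variable {W : Type*} {G F H K : SimpleGraph W} {u v x y a b : W}

lemma acyclic_mono (h : F ≤ G) (hG : G.IsAcyclic) : F.IsAcyclic :=
  fun _v c hc => hG (c.mapLe h) (hc.mapLe h)

lemma fromEdgeSet_le_of_subset {s : Set (Sym2 W)} (h : s ⊆ G.edgeSet) :
    SimpleGraph.fromEdgeSet s ≤ G := by
  have := SimpleGraph.fromEdgeSet_mono h
  rwa [SimpleGraph.fromEdgeSet_edgeSet] at this

lemma reachable_transfer (hHK : ∀ a b : W, H.Adj a b → K.Reachable a b)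
    (h : H.Reachable u v) : K.Reachable u v := by
  obtain ⟨p⟩ := h
  induction p with
  | nil => exact Reachable.refl _
  | cons ha _ ih => exact (hHK _ _ ha).trans ih

lemma mem_support_of_reachable_ne (h : F.Reachable u v) (hne : u ≠ v) :
    u ∈ F.support := by
  obtain ⟨p⟩ := h
  cases p with
  | nil => exact absurd rfl hne
  | cons ha _ => exact ⟨_, ha⟩

lemma acyclic_sup_edge (hF : F.IsAcyclic) (hxy : x ≠ y)
    (hr : ¬ F.Reachable x y) : (F ⊔ fromEdgeSet {s(x, y)}).IsAcyclic := by
  intro v c hc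
  have hedge : s(x, y) ∉ F.edgeSet := fun h => hr (SimpleGraph.Adj.reachable h)
  by_cases he : s(x, y) ∈ c.edges
  · have hKadj := (SimpleGraph.adj_and_reachable_delete_edges_iff_exists_cycle
      (G := F ⊔ fromEdgeSet {s(x, y)}) (v := x) (w := y)).2 ⟨v, c, hc, he⟩
    have hle : ((F ⊔ fromEdgeSet {s(x, y)}) \ fromEdgeSet {s(x, y)}) ≤ F := by
      rw [← SimpleGraph.edgeSet_subset_edgeSet, SimpleGraph.edgeSet_sdiff,
        SimpleGraph.edgeSet_sup]
      intro e he'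
      rcases he'.1 with h1 | h2
      · exact h1
      · exact absurd h2 he'.2
    exact hr (hKadj.2.mono hle)
  · have hsub : ∀ e ∈ c.edges, e ∈ F.edgeSet := by
      intro e hmem
      have h1 := c.edges_subset_edgeSet hmem
      rw [SimpleGraph.edgeSet_sup, SimpleGraph.edgeSet_fromEdgeSet] at h1
      rcases h1 with h1 | h2
      · exact h1
      · exact absurd (h2.1 ▸ hmem) he
    exact hF (c.transfer F hsub) (hc.transfer hsub)

/-- `F` spans `G`: endpoints of any `G`-edge are connected in `F`. -/
def Spans (G F : SimpleGraph W) : Prop := ∀ ⦃a b : W⦄, G.Adj a b → F.Reachable a b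

lemma isMaximalForest_of_spans (hle : F ≤ G) (hac : F.IsAcyclic) (hsp : Spans G F) :
    IsMaximalForest G F := by
  classical
  refine ⟨hle, hac, fun F' hF'G hF'ac hFF' => ?_⟩
  by_contra hne
  obtain ⟨e, heF', heF⟩ := Set.exists_of_ssubset
    (SimpleGraph.edgeSet_ssubset_edgeSet.2 (lt_of_le_of_ne hFF' (Ne.symm hne)))
  induction e using Sym2.ind with
  | _ a b =>
  have hadj' : F'.Adj a b := heF'
  obtain ⟨w⟩ := hsp (hF'G hadj')
  let p := w.toPath
  have hpe : ∀ e ∈ (p : F.Walk a b).edges, e ∈ F'.edgeSet :=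
    fun e he => SimpleGraph.edgeSet_mono hFF' ((p : F.Walk a b).edges_subset_edgeSet he)
  have hq : ((p : F.Walk a b).transfer F' hpe).IsPath := p.2.transfer hpe
  have hcyc := SimpleGraph.Path.cons_isCycle ⟨_, hq⟩ hadj'.symm ?_
  · exact hF'ac _ hcyc
  · rw [Walk.edges_transfer, Sym2.eq_swap]
    exact fun hmem => heF ((p : F.Walk a b).edges_subset_edgeSet hmem)

lemma spans_of_isMaximalForest (h : IsMaximalForest G F) : Spans G F := by
  intro a b hab
  by_contra hr
  have hac : (F ⊔ fromEdgeSet {s(a, b)}).IsAcyclic := acyclic_sup_edge h.2.1 hab.ne hr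
  have hle : F ⊔ fromEdgeSet {s(a, b)} ≤ G :=
    sup_le h.1 (fromEdgeSet_le_of_subset (by simpa using hab))
  have heq := h.2.2 _ hle hac le_sup_left
  apply hr
  have hXF : fromEdgeSet {s(a, b)} ≤ F := sup_eq_left.mp heq
  exact (hXF (by simp [SimpleGraph.fromEdgeSet_adj, hab.ne])).reachable

lemma sSup_acyclic_of_chain {c : Set (SimpleGraph W)} (hc : IsChain (· ≤ ·) c)
    (hne : c.Nonempty) (hac : ∀ F ∈ c, F.IsAcyclic) : (sSup c).IsAcyclic := by
  intro v w hw
  have key : ∀ l : List (Sym2 W), (∀ e ∈ l, ∃ g ∈ c, e ∈ g.edgeSet) →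
      ∃ g ∈ c, ∀ e ∈ l, e ∈ g.edgeSet := by
    intro l
    induction l with
    | nil => exact fun _ => ⟨hne.choose, hne.choose_spec, by simp⟩
    | cons e l ih =>
      intro hl
      obtain ⟨g, hg, hge⟩ := hl e (by simp)
      obtain ⟨g', hg', hge'⟩ := ih fun e' he' => hl e' (by simp [he'])
      rcases eq_or_ne g g' with rfl | hgg
      · exact ⟨g, hg, fun f hf => by
          rcases List.mem_cons.1 hf with rfl | hf
          exacts [hge, hge' _ hf]⟩
      rcases hc.total hg hg' with h | h
      · exact ⟨g', hg', fun f hf => by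
          rcases List.mem_cons.1 hf with rfl | hf
          exacts [SimpleGraph.edgeSet_mono h hge, hge' _ hf]⟩
      · exact ⟨g, hg, fun f hf => by
          rcases List.mem_cons.1 hf with rfl | hf
          exacts [hge, SimpleGraph.edgeSet_mono h (hge' _ hf)]⟩
  obtain ⟨g, hg, hge⟩ := key w.edges (fun e he => by
    have h1 := w.edges_subset_edgeSet he
    induction e using Sym2.ind with
    | _ a b =>
      rw [SimpleGraph.mem_edgeSet, SimpleGraph.sSup_adj] at h1
      obtain ⟨g, hg, hadj⟩ := h1
      exact ⟨g, hg, hadj⟩)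
  exact hac g hg (w.transfer g hge) (hw.transfer hge)

lemma exists_max_acyclic_between (A H' : SimpleGraph W) (hA : A.IsAcyclic) (hAH : A ≤ H') :
    ∃ F, A ≤ F ∧ F ≤ H' ∧ F.IsAcyclic ∧ Spans H' F := by
  obtain ⟨m, _hAm, hm⟩ := zorn_le_nonempty₀ {F | A ≤ F ∧ F ≤ H' ∧ F.IsAcyclic}
    (fun c hcs hchain y hy =>
      ⟨sSup c, ⟨(hcs hy).1.trans (le_sSup hy), sSup_le fun z hz => (hcs hz).2.1,
        sSup_acyclic_of_chain hchain ⟨y, hy⟩ fun F hF => (hcs hF).2.2⟩,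
        fun z hz => le_sSup hz⟩)
    A ⟨le_rfl, hAH, hA⟩
  refine ⟨m, hm.prop.1, hm.prop.2.1, hm.prop.2.2, ?_⟩
  intro a b hab
  by_contra hr
  have hmadj : ¬ m.Adj a b := fun h => hr h.reachable
  have hac' := acyclic_sup_edge hm.prop.2.2 hab.ne hr
  have hmem : m ⊔ fromEdgeSet {s(a, b)} ∈ {F | A ≤ F ∧ F ≤ H' ∧ F.IsAcyclic} :=
    ⟨hm.prop.1.trans le_sup_left,
     sup_le hm.prop.2.1 (fromEdgeSet_le_of_subset (by simpa using hab)), hac'⟩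
  have hle := hm.2 hmem le_sup_left
  exact hr ((le_sup_right.trans hle)
    ((SimpleGraph.fromEdgeSet_adj _).2 ⟨rfl, hab.ne⟩ :
      (fromEdgeSet {s(a, b)}).Adj a b)).reachable

lemma exists_maximalForest_between {A H' : SimpleGraph W} (hA : A.IsAcyclic) (hAH : A ≤ H')
    (hH'G : H' ≤ G) (hsp : Spans G H') :
    ∃ F, IsMaximalForest G F ∧ A ≤ F ∧ F ≤ H' := by
  obtain ⟨F, h1, h2, h3, h4⟩ := exists_max_acyclic_between A H' hA hAH
  exact ⟨F, isMaximalForest_of_spans (h2.trans hH'G)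
    h3 (fun a b hab => reachable_transfer h4 (hsp hab)), h1, h2⟩

lemma exists_isMaximalForest (G : SimpleGraph W) : ∃ F, IsMaximalForest G F := by
  obtain ⟨F, hF, -, -⟩ := exists_maximalForest_between (A := (⊥ : SimpleGraph W)) (H' := G)
    isAcyclic_bot bot_le le_rfl (fun a b hab => hab.reachable)
  exact ⟨F, hF⟩

lemma cycleSet_finite {s : Set (Sym2 W)} (hs : s ∈ cycleSet G) : s.Finite := by
  obtain ⟨v, c, _, rfl⟩ := hs
  exact c.edges.finite_toSet

lemma cycleSet_nonempty {s : Set (Sym2 W)} (hs : s ∈ cycleSet G) : s.Nonempty := by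
  obtain ⟨v, c, hc, rfl⟩ := hs
  have h3 := hc.three_le_length
  cases hl : c.edges with
  | nil => simp [← Walk.length_edges, hl] at h3
  | cons e l => exact ⟨e, by simp [hl]⟩

lemma cycleSet_subset_edgeSet {s : Set (Sym2 W)} (hs : s ∈ cycleSet G) : s ⊆ G.edgeSet := by
  obtain ⟨v, c, _, rfl⟩ := hs
  exact fun e he => c.edges_subset_edgeSet he

lemma exists_cycleSet_of_reachable (hFG : F ≤ G) (hadj : G.Adj u v)
    (hne : s(u, v) ∉ F.edgeSet) (hr : F.Reachable u v) :
    ∃ s ∈ cycleSet G, s(u, v) ∈ s ∧ s \ {s(u, v)} ⊆ F.edgeSet := by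
  classical
  obtain ⟨w⟩ := hr
  let p := w.toPath
  have hpe : ∀ e ∈ (p : F.Walk u v).edges, e ∈ G.edgeSet :=
    fun e he => SimpleGraph.edgeSet_mono hFG ((p : F.Walk u v).edges_subset_edgeSet he)
  have hq : ((p : F.Walk u v).transfer G hpe).IsPath := p.2.transfer hpe
  have hnm : s(v, u) ∉ ((p : F.Walk u v).transfer G hpe).edges := by
    rw [Walk.edges_transfer, Sym2.eq_swap]
    exact fun hmem => hne ((p : F.Walk u v).edges_subset_edgeSet hmem)
  have hcyc := SimpleGraph.Path.cons_isCycle ⟨_, hq⟩ hadj.symm hnm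
  refine ⟨_, ⟨v, _, hcyc, rfl⟩, ?_, ?_⟩
  · show s(u, v) ∈ (Walk.cons hadj.symm _).edges
    rw [Walk.edges_cons, Sym2.eq_swap]
    exact List.mem_cons_self
  · intro e he
    obtain ⟨he1, he2⟩ := he
    rw [Set.mem_setOf_eq, Walk.edges_cons, List.mem_cons] at he1
    rcases he1 with rfl | he1
    · exact absurd (Sym2.eq_swap) he2
    · rw [Walk.edges_transfer] at he1
      exact (p : F.Walk u v).edges_subset_edgeSet he1

lemma diff_subset_cycleEdges (hFG : F ≤ G) (hF' : IsMaximalForest G F') :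
    F.edgeSet \ F'.edgeSet ⊆ ⋃₀ cycleSet G := by
  intro e he
  induction e using Sym2.ind with
  | _ a b =>
    have hadj : G.Adj a b := hFG he.1
    obtain ⟨s, hs, hmem, -⟩ :=
      exists_cycleSet_of_reachable hF'.1 hadj he.2 (spans_of_isMaximalForest hF' hadj)
    exact ⟨s, hs, hmem⟩

lemma mem_edges_start {b w : W} {q : H.Walk b v} (h : H.Adj u b) (hp : (Walk.cons h q).IsPath)
    (he : s(u, w) ∈ (Walk.cons h q).edges) : w = b := by
  rw [Walk.edges_cons, List.mem_cons] at he
  rcases he with heq | he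
  · exact Sym2.congr_right.mp heq
  · exact absurd (q.fst_mem_support_of_mem_edges he) (Walk.cons_isPath_iff h q |>.mp hp).2

lemma not_acyclic_of_min_degree_two (hfin : H.edgeSet.Finite) (hbot : H ≠ ⊥)
    (hdeg : ∀ ⦃a b : W⦄, H.Adj a b → ∃ b', b' ≠ b ∧ H.Adj a b') : ¬ H.IsAcyclic := by
  classical
  intro hac
  obtain ⟨e0, he0⟩ := (SimpleGraph.edgeSet_nonempty (G := H)).2 hbot
  set L : Set ℕ := {n | ∃ (a b : W) (p : H.Walk a b), p.IsPath ∧ p.length = n} with hL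
  have h1 : 1 ∈ L := by
    induction e0 using Sym2.ind with
    | _ a b =>
      have hadj : H.Adj a b := he0
      refine ⟨a, b, Walk.cons hadj Walk.nil, ?_, rfl⟩
      rw [Walk.cons_isPath_iff]
      exact ⟨Walk.IsPath.nil, by simpa using hadj.ne⟩
  have hbdd : BddAbove L := by
    refine ⟨hfin.toFinset.card, fun n hn => ?_⟩
    obtain ⟨a, b, p, hp, rfl⟩ := hn
    have hnd : p.edges.Nodup := hp.isTrail.edges_nodup
    have hsub : (⟨(p.edges : Multiset (Sym2 W)), hnd⟩ : Finset (Sym2 W)) ⊆ hfin.toFinset := by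
      intro e he
      rw [Set.Finite.mem_toFinset]
      exact p.edges_subset_edgeSet (Multiset.mem_coe.1 (Finset.mem_def.1 he))
    have := Finset.card_le_card hsub
    have h' : p.edges.length ≤ hfin.toFinset.card := this
    simpa [← Walk.length_edges] using h'
  have hmem : sSup L ∈ L := Nat.sSup_mem ⟨1, h1⟩ hbdd
  obtain ⟨a, b, p, hp, hlen⟩ := hmem
  have hge1 : 1 ≤ sSup L := le_csSup hbdd h1
  cases p with
  | nil => simp [← hlen] at hge1
  | cons hadj q =>
    rename_i b'
    obtain ⟨w, hwne, hw⟩ := hdeg hadj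
    by_cases hws : w ∈ (Walk.cons hadj q).support
    · have hq' := hp.takeUntil hws
      have hnm : s(w, a) ∉ ((Walk.cons hadj q).takeUntil w hws).edges := by
        rw [Sym2.eq_swap]
        intro hmem
        exact hwne (mem_edges_start hadj hp ((Walk.cons hadj q).edges_takeUntil_subset hws hmem))
      exact hac _ (SimpleGraph.Path.cons_isCycle ⟨_, hq'⟩ hw.symm hnm)
    · have hp' : (Walk.cons hw.symm (Walk.cons hadj q)).IsPath := by
        rw [Walk.cons_isPath_iff]
        exact ⟨hp, hws⟩
      have : (Walk.cons hw.symm (Walk.cons hadj q)).length ∈ L := ⟨_, _, _, hp', rfl⟩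
      have hle := le_csSup hbdd this
      rw [Walk.length_cons, hlen] at hle
      omega

open scoped symmDiff in
lemma even_card_filter [DecidableEq W] {c : G.Walk v v} (hc : c.IsCycle) (x : W) :
    Even ((hc.isCircuit.isTrail.edgesFinset.filter (fun e => x ∈ e)).card) := by
  have heven : Even (c.edges.countP fun e => x ∈ e) :=
    (hc.isCircuit.isTrail.even_countP_edges_iff x).2 (fun hne => absurd rfl hne)
  have hcard : ((hc.isCircuit.isTrail.edgesFinset.filter (fun e => x ∈ e)).card)
      = c.edges.countP fun e => x ∈ e := by
    simp only [Walk.IsTrail.edgesFinset, Finset.filter, Finset.card_mk, Multiset.filter_coe,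
      Multiset.coe_card, List.countP_eq_length_filter]
  rwa [hcard]

open scoped symmDiff in
lemma cycleSet_eq_of_diff_eq {T : SimpleGraph W} (hT : T.IsAcyclic)
    {s₁ s₂ : Set (Sym2 W)} (h₁ : s₁ ∈ cycleSet G) (h₂ : s₂ ∈ cycleSet G)
    (h : s₁ \ T.edgeSet = s₂ \ T.edgeSet) : s₁ = s₂ := by
  classical
  by_contra hne
  obtain ⟨v₁, c₁, hc₁, rfl⟩ := h₁
  obtain ⟨v₂, c₂, hc₂, rfl⟩ := h₂
  set t₁ := hc₁.isCircuit.isTrail.edgesFinset with ht₁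
  set t₂ := hc₂.isCircuit.isTrail.edgesFinset with ht₂
  have hco₁ : {e | e ∈ c₁.edges} = (↑t₁ : Set (Sym2 W)) := by
    ext e; simp [ht₁, Walk.IsTrail.edgesFinset]; exact Iff.rfl
  have hco₂ : {e | e ∈ c₂.edges} = (↑t₂ : Set (Sym2 W)) := by
    ext e; simp [ht₂, Walk.IsTrail.edgesFinset]; exact Iff.rfl
  rw [hco₁, hco₂] at h hne
  have htne : t₁ ≠ t₂ := fun hEq => hne (by rw [hEq])
  set d := t₁ ∆ t₂ with hd
  have hdsub : (↑d : Set (Sym2 W)) ⊆ T.edgeSet := by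
    intro e he
    rw [Finset.mem_coe, hd, Finset.mem_symmDiff] at he
    by_contra heT
    rcases he with ⟨he1, he2⟩ | ⟨he1, he2⟩
    · have hmem : e ∈ (↑t₁ : Set (Sym2 W)) \ T.edgeSet := ⟨he1, heT⟩
      rw [h] at hmem
      exact he2 hmem.1
    · have hmem : e ∈ (↑t₂ : Set (Sym2 W)) \ T.edgeSet := ⟨he1, heT⟩
      rw [← h] at hmem
      exact he2 hmem.1
  set H' := fromEdgeSet (↑d : Set (Sym2 W)) with hH'
  have hHT : H' ≤ T := fromEdgeSet_le_of_subset hdsub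
  have hdne : d.Nonempty := Finset.nonempty_iff_ne_empty.2
    (fun hEq => htne (symmDiff_eq_bot.mp (by rw [← Finset.bot_eq_empty] at hEq; exact hEq)))
  have hHbot : H' ≠ ⊥ := by
    obtain ⟨e, heD⟩ := hdne
    refine (SimpleGraph.edgeSet_nonempty).1 ⟨e, ?_⟩
    rw [hH', SimpleGraph.edgeSet_fromEdgeSet]
    exact ⟨heD, T.not_isDiag_of_mem_edgeSet (hdsub heD)⟩
  have hfin : H'.edgeSet.Finite := by
    rw [hH', SimpleGraph.edgeSet_fromEdgeSet]
    exact d.finite_toSet.diff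
  have hdeg : ∀ ⦃a b : W⦄, H'.Adj a b → ∃ b', b' ≠ b ∧ H'.Adj a b' := by
    intro a b hab
    rw [hH', SimpleGraph.fromEdgeSet_adj] at hab
    have habd : s(a, b) ∈ d := hab.1
    have hA := even_card_filter (G := G) hc₁ a
    have hB := even_card_filter (G := G) hc₂ a
    rw [← ht₁] at hA
    rw [← ht₂] at hB
    have hfil : d.filter (fun e => a ∈ e) =
        (t₁.filter (fun e => a ∈ e)) ∆ (t₂.filter (fun e => a ∈ e)) := by
      ext e
      simp only [Finset.mem_filter, hd, Finset.mem_symmDiff]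
      tauto
    have heven : Even ((d.filter (fun e => a ∈ e)).card) := by
      rw [hfil]
      set A := t₁.filter (fun e => a ∈ e)
      set B := t₂.filter (fun e => a ∈ e)
      have e1 := Finset.card_sdiff_add_card_inter A B
      have e2 := Finset.card_sdiff_add_card_inter B A
      rw [Finset.inter_comm] at e2
      have e3 : (A ∆ B).card = (A \ B).card + (B \ A).card := by
        rw [symmDiff_def, Finset.sup_eq_union]
        exact Finset.card_union_of_disjoint disjoint_sdiff_sdiff
      rw [Nat.even_iff] at hA hB ⊢
      rw [e3]
      omega
    have hge : 1 < (d.filter (fun e => a ∈ e)).card := by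
      have hmem : s(a, b) ∈ d.filter (fun e => a ∈ e) :=
        Finset.mem_filter.2 ⟨habd, Sym2.mem_mk_left a b⟩
      have hpos : 0 < (d.filter (fun e => a ∈ e)).card := Finset.card_pos.2 ⟨_, hmem⟩
      rcases heven with ⟨k, hk⟩
      omega
    obtain ⟨e', he'mem, he'ne⟩ := Finset.exists_mem_ne hge s(a, b)
    rw [Finset.mem_filter] at he'mem
    obtain ⟨he'd, hae'⟩ := he'mem
    have hospec := Sym2.other_spec hae'
    have hnd : ¬ (s(a, Sym2.Mem.other hae')).IsDiag := by
      rw [hospec]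
      exact T.not_isDiag_of_mem_edgeSet (hdsub he'd)
    refine ⟨Sym2.Mem.other hae', ?_, ?_⟩
    · intro hEq
      apply he'ne
      rw [← hospec, hEq]
    · rw [hH', SimpleGraph.fromEdgeSet_adj]
      refine ⟨by rw [hospec]; exact he'd, fun hEq => hnd (Sym2.mk_isDiag_iff.2 hEq)⟩
  exact not_acyclic_of_min_degree_two hfin hHbot hdeg (acyclic_mono hHT hT)

lemma singleton_diff_diag {a b : W} (hne : a ≠ b) :
    ({s(a, b)} : Set (Sym2 W)) \ Sym2.diagSet = {s(a, b)} := by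
  ext e'
  constructor
  · exact fun h => h.1
  · intro h1
    rw [Set.mem_singleton_iff] at h1
    subst h1
    exact ⟨rfl, by simp [Sym2.mem_diagSet, Sym2.mk_isDiag_iff, hne]⟩

lemma exists_adjacent_forest (hF : IsMaximalForest G F) {f : Sym2 W} (hfG : f ∈ G.edgeSet)
    (hfF : f ∉ F.edgeSet) :
    ∃ F' : SimpleGraph W, IsMaximalForest G F' ∧ F'.edgeSet \ F.edgeSet = {f} ∧
      (F.edgeSet \ F'.edgeSet).encard = 1 := by
  classical
  induction f using Sym2.ind with
  | _ x y =>
  have hadj : G.Adj x y := hfG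
  have hxy : x ≠ y := hadj.ne
  obtain ⟨w0⟩ := spans_of_isMaximalForest hF hadj
  cases hpv : (w0.toPath : F.Walk x y) with
  | nil => exact absurd rfl hxy
  | cons hxz q =>
  rename_i z
  set p : F.Path x y := w0.toPath with hp
  have hpe : s(x, z) ∈ (p : F.Walk x y).edges := by
    rw [hp, hpv, Walk.edges_cons]
    exact List.mem_cons_self
  have heF : s(x, z) ∈ F.edgeSet := hxz
  have hef : s(x, z) ≠ s(x, y) := fun hEq => hfF (hEq ▸ heF)
  set K := F ⊔ fromEdgeSet {s(x, y)} with hK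
  have hFK : F ≤ K := le_sup_left
  have hKG : K ≤ G := sup_le hF.1 (fromEdgeSet_le_of_subset (by simpa using hadj))
  -- build a cycle in K through s(x, z)
  have hpeK : ∀ e ∈ (p : F.Walk x y).edges, e ∈ K.edgeSet :=
    fun e he => SimpleGraph.edgeSet_mono hFK ((p : F.Walk x y).edges_subset_edgeSet he)
  have hqK : ((p : F.Walk x y).transfer K hpeK).IsPath := p.2.transfer hpeK
  have hKyx : K.Adj y x := by
    rw [hK, SimpleGraph.sup_adj]
    exact Or.inr ((SimpleGraph.fromEdgeSet_adj _).2 ⟨by rw [Sym2.eq_swap]; rfl, hxy.symm⟩)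
  have hnm : s(y, x) ∉ ((p : F.Walk x y).transfer K hpeK).edges := by
    rw [Walk.edges_transfer, Sym2.eq_swap]
    exact fun hmem => hfF ((p : F.Walk x y).edges_subset_edgeSet hmem)
  have hcyc := SimpleGraph.Path.cons_isCycle ⟨_, hqK⟩ hKyx hnm
  have hein : s(x, z) ∈ (Walk.cons hKyx ((p : F.Walk x y).transfer K hpeK)).edges := by
    rw [Walk.edges_cons, Walk.edges_transfer]
    exact List.mem_cons_of_mem _ hpe
  have hreach : (K \ fromEdgeSet {s(x, z)}).Reachable x z :=
    ((SimpleGraph.adj_and_reachable_delete_edges_iff_exists_cycle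
      (G := K) (v := x) (w := z)).2 ⟨y, _, hcyc, hein⟩).2
  set F' := K \ fromEdgeSet {s(x, z)} with hF'
  have hE' : F'.edgeSet = (F.edgeSet ∪ {s(x, y)}) \ {s(x, z)} := by
    rw [hF', SimpleGraph.edgeSet_sdiff, hK, SimpleGraph.edgeSet_sup,
      SimpleGraph.edgeSet_fromEdgeSet, SimpleGraph.edgeSet_fromEdgeSet,
      singleton_diff_diag hxy, singleton_diff_diag hxz.ne]
  -- acyclicity of F'
  have hac' : F'.IsAcyclic := by
    intro v' c' hc'
    by_cases hfc : s(x, y) ∈ c'.edges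
    · have hrf := ((SimpleGraph.adj_and_reachable_delete_edges_iff_exists_cycle
        (G := F') (v := x) (w := y)).2 ⟨v', c', hc', hfc⟩).2
      have hle2 : F' \ fromEdgeSet {s(x, y)} ≤ F \ fromEdgeSet {s(x, z)} := by
        intro a b hab
        rw [SimpleGraph.sdiff_adj] at hab ⊢
        obtain ⟨h1, h2⟩ := hab
        rw [hF', SimpleGraph.sdiff_adj, hK, SimpleGraph.sup_adj] at h1
        exact ⟨h1.1.resolve_right h2, h1.2⟩
      obtain ⟨q'⟩ := hrf.mono hle2
      -- two distinct paths in F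
      have hq'F : ∀ e ∈ (q'.toPath : (F \ fromEdgeSet {s(x, z)}).Walk x y).edges,
          e ∈ F.edgeSet := fun e he =>
        SimpleGraph.edgeSet_mono sdiff_le
          ((q'.toPath : (F \ fromEdgeSet {s(x, z)}).Walk x y).edges_subset_edgeSet he)
      have hq'path : ((q'.toPath : (F \ fromEdgeSet {s(x, z)}).Walk x y).transfer F hq'F).IsPath :=
        q'.toPath.2.transfer hq'F
      have huniq := hF.2.1.path_unique ⟨_, hq'path⟩ p
      have hedges := congrArg (fun r : F.Path x y => (r : F.Walk x y).edges) huniq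
      simp only at hedges
      have hmemq : s(x, z) ∈
          ((q'.toPath : (F \ fromEdgeSet {s(x, z)}).Walk x y).transfer F hq'F).edges := by
        rw [hedges]
        exact hpe
      rw [Walk.edges_transfer] at hmemq
      have hmem := q'.edges_subset_edgeSet (Walk.edges_toPath_subset q' hmemq)
      rw [SimpleGraph.edgeSet_sdiff, SimpleGraph.edgeSet_fromEdgeSet,
        singleton_diff_diag hxz.ne] at hmem
      exact hmem.2 rfl
    · have hsub : ∀ e ∈ c'.edges, e ∈ F.edgeSet := by
        intro e he
        have h1 := c'.edges_subset_edgeSet he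
        rw [hE'] at h1
        rcases h1.1 with h2 | h2
        · exact h2
        · exact absurd (h2 ▸ he) hfc
      exact hF.2.1 (c'.transfer F hsub) (hc'.transfer hsub)
  -- spanning
  have hFtoF' : ∀ a b : W, F.Adj a b → F'.Reachable a b := by
    intro a b hab
    by_cases hEq : s(a, b) = s(x, z)
    · rw [Sym2.eq_iff] at hEq
      rcases hEq with ⟨rfl, rfl⟩ | ⟨rfl, rfl⟩
      · exact hreach
      · exact hreach.symm
    · refine SimpleGraph.Adj.reachable ?_
      rw [← SimpleGraph.mem_edgeSet, hE']
      exact ⟨Or.inl hab, hEq⟩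
  have hsp' : Spans G F' := fun a b hab =>
    reachable_transfer (fun a b h => hFtoF' a b h) (spans_of_isMaximalForest hF hab)
  have hmax' : IsMaximalForest G F' :=
    isMaximalForest_of_spans (sdiff_le.trans hKG) hac' hsp'
  refine ⟨F', hmax', ?_, ?_⟩
  · rw [hE']
    ext e'
    simp only [Set.mem_diff, Set.mem_union, Set.mem_singleton_iff]
    constructor
    · rintro ⟨⟨h1 | h1, _⟩, h3⟩
      · exact absurd h1 h3
      · exact h1
    · rintro rfl
      exact ⟨⟨Or.inr rfl, hef.symm⟩, hfF⟩
  · rw [hE']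
    have : F.edgeSet \ ((F.edgeSet ∪ {s(x, y)}) \ {s(x, z)}) = {s(x, z)} := by
      ext e'
      simp only [Set.mem_diff, Set.mem_union, Set.mem_singleton_iff, not_and, not_not]
      constructor
      · rintro ⟨h1, h2⟩
        exact h2 (Or.inl h1)
      · rintro rfl
        exact ⟨heF, fun _ => rfl⟩
    rw [this]
    exact Set.encard_singleton _

universe u

section CardinalSection

variable {W : Type u} {G T F : SimpleGraph W} {β : Cardinal.{u}}

lemma sUnion_cycleSet_subset : ⋃₀ cycleSet G ⊆ G.edgeSet := fun _e he => by
  obtain ⟨s, hs, hes⟩ := he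
  exact cycleSet_subset_edgeSet hs hes

lemma mk_cycleEdges_le (hc : #(cycleSet G) = β) (hβ : ℵ₀ ≤ β) :
    #↑(⋃₀ cycleSet G) ≤ β := by
  refine le_trans (Cardinal.mk_sUnion_le _) ?_
  have h1 : ⨆ s : ↑(cycleSet G), #↑(s : Set (Sym2 W)) ≤ ℵ₀ :=
    ciSup_le' fun s => le_of_lt (cycleSet_finite s.2).lt_aleph0
  calc #↑(cycleSet G) * ⨆ s : ↑(cycleSet G), #↑(s : Set (Sym2 W))
      ≤ β * ℵ₀ := mul_le_mul' (le_of_eq hc) h1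
    _ = β := Cardinal.mul_aleph0_eq hβ

lemma mk_chords_eq (hT : T.IsAcyclic) (hc : #(cycleSet G) = β) (hβ : ℵ₀ ≤ β) :
    #↑((⋃₀ cycleSet G) \ T.edgeSet) = β := by
  classical
  have hle : #↑((⋃₀ cycleSet G) \ T.edgeSet) ≤ β :=
    le_trans (Cardinal.mk_le_mk_of_subset Set.diff_subset) (mk_cycleEdges_le hc hβ)
  set X := (⋃₀ cycleSet G) \ T.edgeSet with hX
  have hsubX : ∀ s : ↑(cycleSet G), (s : Set (Sym2 W)) \ T.edgeSet ⊆ X := by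
    intro s e he
    exact ⟨⟨s, s.2, he.1⟩, he.2⟩
  have hinj : Function.Injective (fun s : ↑(cycleSet G) =>
      (Set.Finite.toFinset (Set.Finite.preimage
        Subtype.val_injective.injOn
        ((cycleSet_finite s.2).diff (t := T.edgeSet))) :
          Finset ↑X)) := by
    intro s₁ s₂ hEq
    rw [Set.Finite.toFinset_inj] at hEq
    have hEq2 := congrArg (Set.image (Subtype.val : ↑X → Sym2 W)) hEq
    rw [Subtype.image_preimage_val, Subtype.image_preimage_val,
      Set.inter_eq_self_of_subset_right (hsubX s₁),
      Set.inter_eq_self_of_subset_right (hsubX s₂)] at hEq2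
    exact Subtype.ext (cycleSet_eq_of_diff_eq hT s₁.2 s₂.2 hEq2)
  have h2 : β ≤ #(Finset ↑X) := hc ▸ Cardinal.mk_le_of_injective hinj
  rcases finite_or_infinite ↑X with hfin | hinf
  · exfalso
    haveI := Fintype.ofFinite ↑X
    have : #(Finset ↑X) < ℵ₀ := Cardinal.mk_lt_aleph0_iff.2 inferInstance
    exact absurd (hβ.trans h2) (not_le.2 this)
  · rw [Cardinal.mk_finset_of_infinite] at h2
    exact le_antisymm hle h2

lemma mk_cycleEdges_eq (hc : #(cycleSet G) = β) (hβ : ℵ₀ ≤ β) :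
    #↑(⋃₀ cycleSet G) = β := by
  have := mk_chords_eq (G := G) (T := (⊥ : SimpleGraph W)) isAcyclic_bot hc hβ
  rwa [SimpleGraph.edgeSet_bot, Set.diff_empty] at this

lemma sym2_out_eq (z : Sym2 W) : z = s(z.out.1, z.out.2) := by
  conv_lhs => rw [← Quot.out_eq z]

lemma fromEdgeSet_edgeSet_of_subset {s : Set (Sym2 W)} (h : s ⊆ G.edgeSet) :
    (SimpleGraph.fromEdgeSet s).edgeSet = s := by
  rw [SimpleGraph.edgeSet_fromEdgeSet]
  ext e
  exact ⟨fun he => he.1, fun he => ⟨he, G.not_isDiag_of_mem_edgeSet (h he)⟩⟩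

lemma mk_spanning_edgeSet_eq {B : Set (Sym2 W)} (hBG : B ⊆ G.edgeSet)
    {TB : SimpleGraph W} (hTB : TB ≤ SimpleGraph.fromEdgeSet B)
    (hsp : Spans (SimpleGraph.fromEdgeSet B) TB) (hB : ℵ₀ ≤ #↑B) :
    #↑TB.edgeSet = #↑B := by
  classical
  have hTBsub : TB.edgeSet ⊆ B :=
    (SimpleGraph.edgeSet_mono hTB).trans (by rw [fromEdgeSet_edgeSet_of_subset hBG])
  have h1 : #↑TB.edgeSet ≤ #↑B := Cardinal.mk_le_mk_of_subset hTBsub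
  -- every endpoint of an edge of B is in the support of TB
  have hsupp : ∀ (e : Sym2 W), e ∈ B → ∀ x ∈ e, x ∈ TB.support := by
    intro e heB
    induction e using Sym2.ind with
    | _ a b =>
      have hadj : (SimpleGraph.fromEdgeSet B).Adj a b :=
        (SimpleGraph.fromEdgeSet_adj _).2 ⟨heB, fun hEq =>
          G.not_isDiag_of_mem_edgeSet (hBG heB) (Sym2.mk_isDiag_iff.2 hEq)⟩
      intro x hx
      rw [Sym2.mem_iff] at hx
      rcases hx with rfl | rfl
      · exact mem_support_of_reachable_ne (hsp hadj) hadj.ne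
      · exact mem_support_of_reachable_ne (hsp hadj).symm hadj.ne.symm
  -- B injects into support × support
  have hBsupp : #↑B ≤ #↑TB.support * #↑TB.support := by
    have hinj : Function.Injective (fun e : ↑B =>
        ((⟨(e : Sym2 W).out.1, hsupp e.1 e.2 _ (Sym2.out_fst_mem _)⟩ : ↑TB.support),
         (⟨(e : Sym2 W).out.2, hsupp e.1 e.2 _ (Sym2.out_snd_mem _)⟩ : ↑TB.support))) := by
      intro e₁ e₂ hEq
      rw [Prod.mk.injEq, Subtype.mk.injEq, Subtype.mk.injEq] at hEq
      apply Subtype.ext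
      have h1 := (e₁ : Sym2 W).out_eq
      have h2 := (e₂ : Sym2 W).out_eq
      rw [← h1, ← h2]
      exact congrArg (Quot.mk _) (Prod.ext_iff.mpr ⟨hEq.1, hEq.2⟩)
    simpa [Cardinal.mk_prod, Cardinal.lift_id] using Cardinal.mk_le_of_injective hinj
  -- support injects into edgeSet ⊕ edgeSet
  have hsuppE : #↑TB.support ≤ #↑TB.edgeSet + #↑TB.edgeSet := by
    have hch : ∀ v : ↑TB.support, ∃ w, TB.Adj v w := fun v => v.2
    choose w hw using hch
    have hinj : Function.Injective (fun v : ↑TB.support =>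
        if (v : W) = (s((v : W), w v)).out.1
          then (Sum.inl ⟨s((v : W), w v), (hw v)⟩ : ↑TB.edgeSet ⊕ ↑TB.edgeSet)
          else (Sum.inr ⟨s((v : W), w v), (hw v)⟩ : ↑TB.edgeSet ⊕ ↑TB.edgeSet)) := by
      intro v₁ v₂ hEq
      dsimp only at hEq
      split_ifs at hEq with h1 h2 h2
      · replace hEq : s((v₁ : W), w v₁) = s((v₂ : W), w v₂) :=
          congrArg Subtype.val (Sum.inl_injective hEq)
        apply Subtype.ext
        rw [h1, h2, hEq]
      · have hv₁ : (v₁ : W) ∈ s((v₁ : W), w v₁) := Sym2.mem_mk_left _ _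
        have hv₂ : (v₂ : W) ∈ s((v₂ : W), w v₂) := Sym2.mem_mk_left _ _
        replace hEq : s((v₁ : W), w v₁) = s((v₂ : W), w v₂) :=
          congrArg Subtype.val (Sum.inr_injective hEq)
        apply Subtype.ext
        have m₁ : (v₁ : W) = (s((v₁ : W), w v₁)).out.1 ∨ (v₁ : W) = (s((v₁ : W), w v₁)).out.2 := by
          rw [sym2_out_eq s((v₁ : W), w v₁), Sym2.mem_iff] at hv₁
          exact hv₁
        have m₂ : (v₂ : W) = (s((v₂ : W), w v₂)).out.1 ∨ (v₂ : W) = (s((v₂ : W), w v₂)).out.2 := by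
          rw [sym2_out_eq s((v₂ : W), w v₂), Sym2.mem_iff] at hv₂
          exact hv₂
        rw [m₁.resolve_left h1, m₂.resolve_left h2, hEq]
    simpa [Cardinal.mk_sum, Cardinal.lift_id] using Cardinal.mk_le_of_injective hinj
  rcases finite_or_infinite ↑TB.edgeSet with hfin | hinf
  · exfalso
    haveI := Fintype.ofFinite ↑TB.edgeSet
    have he : #↑TB.edgeSet < ℵ₀ := Cardinal.mk_lt_aleph0_iff.2 inferInstance
    have hs : #↑TB.support < ℵ₀ := lt_of_le_of_lt hsuppE (Cardinal.add_lt_aleph0 he he)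
    have : #↑B < ℵ₀ := lt_of_le_of_lt hBsupp (Cardinal.mul_lt_aleph0 hs hs)
    exact absurd hB (not_le.2 this)
  · have he : ℵ₀ ≤ #↑TB.edgeSet := Cardinal.aleph0_le_mk _
    have hs : #↑TB.support ≤ #↑TB.edgeSet := hsuppE.trans (le_of_eq (Cardinal.add_eq_self he))
    have h2 : #↑B ≤ #↑TB.edgeSet := by
      refine hBsupp.trans ?_
      calc #↑TB.support * #↑TB.support ≤ #↑TB.edgeSet * #↑TB.edgeSet := mul_le_mul' hs hs
        _ = #↑TB.edgeSet := Cardinal.mul_eq_self he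
    exact le_antisymm h1 h2

end CardinalSection

section CardinalSection2

variable {W : Type u} {G : SimpleGraph W} {β : Cardinal.{u}}

lemma mk_forests_le (hc : #(cycleSet G) = β) (hβ : ℵ₀ ≤ β) :
    #{F : SimpleGraph W // IsMaximalForest G F} ≤ 2 ^ β := by
  classical
  have key : ∀ (A B : SimpleGraph W), IsMaximalForest G A → IsMaximalForest G B →
      (⋃₀ cycleSet G) ∩ A.edgeSet = (⋃₀ cycleSet G) ∩ B.edgeSet →
      A.edgeSet ⊆ B.edgeSet := by
    intro A B hA hB hABeq e he
    by_cases heEc : e ∈ ⋃₀ cycleSet G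
    · have h1 : e ∈ (⋃₀ cycleSet G) ∩ A.edgeSet := ⟨heEc, he⟩
      rw [hABeq] at h1
      exact h1.2
    · by_contra heB
      exact heEc (diff_subset_cycleEdges (G := G) le_rfl hB
        ⟨SimpleGraph.edgeSet_mono hA.1 he, heB⟩)
  have hinj : Function.Injective (fun F : {F : SimpleGraph W // IsMaximalForest G F} =>
      (Subtype.val ⁻¹' F.1.edgeSet : Set ↑(⋃₀ cycleSet G))) := by
    intro F₁ F₂ hEq
    have hEq2 := congrArg (Set.image (Subtype.val : ↑(⋃₀ cycleSet G) → Sym2 W)) hEq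
    rw [Subtype.image_preimage_val, Subtype.image_preimage_val] at hEq2
    exact Subtype.ext (SimpleGraph.edgeSet_injective (Set.Subset.antisymm
      (key _ _ F₁.2 F₂.2 hEq2) (key _ _ F₂.2 F₁.2 hEq2.symm)))
  calc #{F : SimpleGraph W // IsMaximalForest G F}
      ≤ #(Set ↑(⋃₀ cycleSet G)) := Cardinal.mk_le_of_injective hinj
    _ = 2 ^ β := by rw [Cardinal.mk_set, mk_cycleEdges_eq hc hβ]

lemma mk_forests_ge (hc : #(cycleSet G) = β) (hβ : ℵ₀ ≤ β) :
    2 ^ β ≤ #{F : SimpleGraph W // IsMaximalForest G F} := by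
  classical
  obtain ⟨T₀, hT₀⟩ := exists_isMaximalForest G
  set B := (⋃₀ cycleSet G) \ T₀.edgeSet with hB
  have hBG : B ⊆ G.edgeSet := fun e he => sUnion_cycleSet_subset he.1
  have hBcard : #↑B = β := mk_chords_eq hT₀.2.1 hc hβ
  obtain ⟨TB, _h1, h2, h3, h4⟩ := exists_max_acyclic_between
    ⊥ (SimpleGraph.fromEdgeSet B) isAcyclic_bot bot_le
  have hTBcard : #↑TB.edgeSet = β := by
    rw [← hBcard]
    exact mk_spanning_edgeSet_eq hBG h2 h4 (by rw [hBcard]; exact hβ)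
  have hTBB : TB.edgeSet ⊆ B := by
    have := SimpleGraph.edgeSet_mono h2
    rwa [fromEdgeSet_edgeSet_of_subset hBG] at this
  have hex : ∀ A : Set ↑TB.edgeSet, ∃ Fm : SimpleGraph W,
      IsMaximalForest G Fm ∧ Fm.edgeSet ∩ B = Subtype.val '' A := by
    intro A
    have hAsub : Subtype.val '' A ⊆ TB.edgeSet := by
      rintro e ⟨e', _, rfl⟩
      exact e'.2
    have hAG : Subtype.val '' A ⊆ G.edgeSet := hAsub.trans (hTBB.trans hBG)
    have hA'TB : SimpleGraph.fromEdgeSet (Subtype.val '' A) ≤ TB := by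
      have := SimpleGraph.fromEdgeSet_mono hAsub
      rwa [SimpleGraph.fromEdgeSet_edgeSet] at this
    have hA'ac : (SimpleGraph.fromEdgeSet (Subtype.val '' A)).IsAcyclic := acyclic_mono hA'TB h3
    have hsp : Spans G (T₀ ⊔ SimpleGraph.fromEdgeSet (Subtype.val '' A)) := fun a b hab =>
      (spans_of_isMaximalForest hT₀ hab).mono le_sup_left
    obtain ⟨Fm, hFm, hAFm, hFmH⟩ := exists_maximalForest_between hA'ac le_sup_right
      (sup_le hT₀.1 (fromEdgeSet_le_of_subset hAG)) hsp
    refine ⟨Fm, hFm, ?_⟩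
    have hA'edge : (SimpleGraph.fromEdgeSet (Subtype.val '' A)).edgeSet = Subtype.val '' A :=
      fromEdgeSet_edgeSet_of_subset (G := G) hAG
    apply Set.Subset.antisymm
    · intro e he
      have hesup := SimpleGraph.edgeSet_mono hFmH he.1
      rw [SimpleGraph.edgeSet_sup, hA'edge] at hesup
      rcases hesup with h | h
      · exact absurd h he.2.2
      · exact h
    · intro e he
      refine ⟨SimpleGraph.edgeSet_mono hAFm (by rw [hA'edge]; exact he), hTBB (hAsub he)⟩
  choose Fm hFm1 hFm2 using hex
  have hinj : Function.Injective (fun A : Set ↑TB.edgeSet =>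
      (⟨Fm A, hFm1 A⟩ : {F : SimpleGraph W // IsMaximalForest G F})) := by
    intro A₁ A₂ hEq
    have hFmEq : Fm A₁ = Fm A₂ := congrArg Subtype.val hEq
    have h5 : Subtype.val '' A₁ = Subtype.val '' A₂ := by
      rw [← hFm2 A₁, ← hFm2 A₂, hFmEq]
    exact Set.image_injective.2 Subtype.val_injective h5
  calc 2 ^ β = #(Set ↑TB.edgeSet) := by rw [Cardinal.mk_set, hTBcard]
    _ ≤ _ := Cardinal.mk_le_of_injective hinj

end CardinalSection2

section Components

open scoped symmDiff

variable {W : Type u} {G : SimpleGraph W} {β : Cardinal.{u}}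

lemma adj_symmDiff_finite {F₁ F₂ : {F : SimpleGraph W // IsMaximalForest G F}}
    (h : (forestGraph G).Adj F₁ F₂) : (F₁.1.edgeSet ∆ F₂.1.edgeSet).Finite := by
  obtain ⟨h1, h2⟩ := (h : (F₁.1.edgeSet \ F₂.1.edgeSet).encard = 1 ∧
    (F₂.1.edgeSet \ F₁.1.edgeSet).encard = 1)
  obtain ⟨e1, he1⟩ := Set.encard_eq_one.mp h1
  obtain ⟨e2, he2⟩ := Set.encard_eq_one.mp h2
  rw [Set.symmDiff_def, he1, he2]
  exact (Set.finite_singleton _).union (Set.finite_singleton _)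

lemma reachable_symmDiff_finite {F₁ F₂ : {F : SimpleGraph W // IsMaximalForest G F}}
    (h : (forestGraph G).Reachable F₁ F₂) : (F₁.1.edgeSet ∆ F₂.1.edgeSet).Finite := by
  obtain ⟨p⟩ := h
  induction p with
  | nil =>
    rw [symmDiff_self]
    exact Set.finite_empty
  | cons ha q ih =>
    exact Set.Finite.subset ((adj_symmDiff_finite ha).union ih) (symmDiff_triangle _ _ _)

lemma symmDiff_subset_cycleEdges {F₁ F₂ : {F : SimpleGraph W // IsMaximalForest G F}} :
    F₁.1.edgeSet ∆ F₂.1.edgeSet ⊆ ⋃₀ cycleSet G := by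
  rw [Set.symmDiff_def]
  exact Set.union_subset (diff_subset_cycleEdges F₁.2.1 F₂.2)
    (diff_subset_cycleEdges F₂.2.1 F₁.2)

lemma mk_supp_le (hc : #(cycleSet G) = β) (hβ : ℵ₀ ≤ β)
    (c : (forestGraph G).ConnectedComponent) : #(c.supp) ≤ β := by
  classical
  obtain ⟨F₀, hF₀⟩ := c.exists_rep
  haveI : Infinite ↑(⋃₀ cycleSet G) := by
    rw [Cardinal.infinite_iff, mk_cycleEdges_eq hc hβ]
    exact hβ
  have hreach : ∀ F : ↑c.supp, (forestGraph G).Reachable F.1 F₀ := by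
    intro F
    apply SimpleGraph.ConnectedComponent.eq.1
    exact ((SimpleGraph.ConnectedComponent.mem_supp_iff _ _).1 F.2).trans hF₀.symm
  have hinj : Function.Injective (fun F : ↑c.supp =>
      (Set.Finite.toFinset (Set.Finite.preimage Subtype.val_injective.injOn
        (reachable_symmDiff_finite (hreach F))) : Finset ↑(⋃₀ cycleSet G))) := by
    intro A₁ A₂ hEq
    rw [Set.Finite.toFinset_inj] at hEq
    have hEq2 := congrArg (Set.image (Subtype.val : ↑(⋃₀ cycleSet G) → Sym2 W)) hEq
    rw [Subtype.image_preimage_val, Subtype.image_preimage_val,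
      Set.inter_eq_self_of_subset_right symmDiff_subset_cycleEdges,
      Set.inter_eq_self_of_subset_right symmDiff_subset_cycleEdges] at hEq2
    have h3 : A₁.1.1.edgeSet = A₂.1.1.edgeSet := symmDiff_left_injective _ hEq2
    exact Subtype.ext (Subtype.ext (SimpleGraph.edgeSet_injective h3))
  calc #(c.supp) ≤ #(Finset ↑(⋃₀ cycleSet G)) := Cardinal.mk_le_of_injective hinj
    _ = #↑(⋃₀ cycleSet G) := Cardinal.mk_finset_of_infinite _
    _ = β := mk_cycleEdges_eq hc hβ

lemma mk_supp_ge (hc : #(cycleSet G) = β) (hβ : ℵ₀ ≤ β)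
    (c : (forestGraph G).ConnectedComponent) : β ≤ #(c.supp) := by
  classical
  obtain ⟨F₀, hF₀⟩ := c.exists_rep
  have hchords : #↑((⋃₀ cycleSet G) \ F₀.1.edgeSet) = β := mk_chords_eq F₀.2.2.1 hc hβ
  have hex : ∀ f : ↑((⋃₀ cycleSet G) \ F₀.1.edgeSet), ∃ Fc : ↑c.supp,
      Fc.1.1.edgeSet \ F₀.1.edgeSet = {f.1} := by
    intro f
    obtain ⟨F', hF', hd1, hd2⟩ := exists_adjacent_forest F₀.2
      (sUnion_cycleSet_subset f.2.1) f.2.2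
    have hadj : (forestGraph G).Adj ⟨F', hF'⟩ F₀ :=
      (⟨by rw [show F'.edgeSet \ F₀.1.edgeSet = {f.1} from hd1]; exact Set.encard_singleton _, hd2⟩ :
        (F'.edgeSet \ F₀.1.edgeSet).encard = 1 ∧ (F₀.1.edgeSet \ F'.edgeSet).encard = 1)
    have hmem : (⟨F', hF'⟩ : {F : SimpleGraph W // IsMaximalForest G F}) ∈ c.supp := by
      rw [SimpleGraph.ConnectedComponent.mem_supp_iff, ← hF₀]
      exact SimpleGraph.ConnectedComponent.eq.2 hadj.reachable
    exact ⟨⟨⟨F', hF'⟩, hmem⟩, hd1⟩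
  choose Fc hFc using hex
  have hinj : Function.Injective Fc := by
    intro f₁ f₂ hEq
    have hsing : ({f₁.1} : Set (Sym2 W)) = {f₂.1} := by
      rw [← hFc f₁, ← hFc f₂, hEq]
    exact Subtype.ext (Set.singleton_eq_singleton_iff.mp hsing)
  rw [← hchords]
  exact Cardinal.mk_le_of_injective hinj

end Components

end ForestAux

universe u

/-- If `G` has `β` cycles, `β` infinite, then every connected component of the forest
graph has exactly `β` vertices and the forest graph has exactly `2 ^ β` components. -/
theorem forestGraph_components {W : Type u} (G : SimpleGraph W) (β : Cardinal.{u}) (hβ : ℵ₀ ≤ β)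
    (hc : #(cycleSet G) = β) :
    (∀ c : (forestGraph G).ConnectedComponent, #(c.supp) = β) ∧
      #((forestGraph G).ConnectedComponent) = 2 ^ β := by
  classical
  have hsupp : ∀ c : (forestGraph G).ConnectedComponent, #(c.supp) = β :=
    fun c => le_antisymm (ForestAux.mk_supp_le hc hβ c) (ForestAux.mk_supp_ge hc hβ c)
  refine ⟨hsupp, ?_⟩
  have hMF : #{F : SimpleGraph W // IsMaximalForest G F} = 2 ^ β :=
    le_antisymm (ForestAux.mk_forests_le hc hβ) (ForestAux.mk_forests_ge hc hβ)
  have hsigma : Cardinal.sum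
      (fun c : (forestGraph G).ConnectedComponent => #(c.supp)) = 2 ^ β := by
    rw [← hMF, ← Cardinal.mk_sigma]
    exact Cardinal.mk_congr ((Equiv.sigmaCongrRight (fun c =>
      (Equiv.subtypeEquivRight (fun F =>
        (SimpleGraph.ConnectedComponent.mem_supp_iff _ _))))).trans
      (Equiv.sigmaFiberEquiv (SimpleGraph.connectedComponentMk (forestGraph G))))
  have hkey : #((forestGraph G).ConnectedComponent) * β = 2 ^ β := by
    rw [← Cardinal.sum_const', ← hsigma]
    exact congrArg Cardinal.sum (funext fun c => (hsupp c).symm)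
  by_cases hκω : ℵ₀ ≤ #((forestGraph G).ConnectedComponent)
  · rw [Cardinal.mul_eq_max hκω hβ] at hkey
    rcases le_total #((forestGraph G).ConnectedComponent) β with hl | hl
    · rw [max_eq_right hl] at hkey
      exact absurd hkey (Cardinal.cantor β).ne
    · rw [max_eq_left hl] at hkey
      exact hkey
  · exfalso
    push_neg at hκω
    have hle : #((forestGraph G).ConnectedComponent) * β ≤ β := by
      calc #((forestGraph G).ConnectedComponent) * β ≤ β * β :=
            mul_le_mul' (le_of_lt (lt_of_lt_of_le hκω hβ)) le_rfl
        _ = β := Cardinal.mul_eq_self hβ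
    rw [hkey] at hle
    exact absurd hle (not_le.2 (Cardinal.cantor β))
end

section
/- A forest graph different from K_1 has no isolated vertices and no isthmi (bridges): every vertex of F(H) has a neighbor, and every edge of F(H) lies on a cycle. -/
open Cardinal

variable {V : Type*}

open SimpleGraph Walk



lemma edgeSet_edge_of_ne {u v : V} (h : u ≠ v) :
    (SimpleGraph.edge u v).edgeSet = {s(u, v)} := by
  rw [SimpleGraph.edge, edgeSet_fromEdgeSet]
  ext e
  simp only [Set.mem_diff, Set.mem_singleton_iff, Set.mem_setOf_eq]
  constructor
  · exact fun ⟨h1, _⟩ => h1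
  · rintro rfl; exact ⟨rfl, by simp [h]⟩

lemma edge_le_of_adj {H : SimpleGraph V} {u v : V} (h : H.Adj u v) :
    SimpleGraph.edge u v ≤ H := by
  intro a b hab
  rw [SimpleGraph.edge_adj] at hab
  rcases hab with ⟨⟨rfl, rfl⟩ | ⟨rfl, rfl⟩, -⟩
  exacts [h, h.symm]

lemma reachable_sup_edge {G : SimpleGraph V} {x y : V} (hxy : G.Reachable x y)
    {a b : V} (h : (G ⊔ SimpleGraph.edge x y).Reachable a b) : G.Reachable a b := by
  obtain ⟨w⟩ := h
  induction w with
  | nil => exact Reachable.refl _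
  | cons h' w ih =>
    refine Reachable.trans ?_ ih
    rw [sup_adj] at h'
    rcases h' with h'' | h''
    · exact h''.reachable
    · rw [SimpleGraph.edge_adj] at h''
      rcases h''.1 with ⟨rfl, rfl⟩ | ⟨rfl, rfl⟩
      exacts [hxy, hxy.symm]

lemma triangle_isCycle {α : Type*} {G : SimpleGraph α} {a b c : α} (hab : G.Adj a b)
    (hbc : G.Adj b c) (hca : G.Adj c a) :
    (Walk.cons hab (Walk.cons hbc (Walk.cons hca Walk.nil))).IsCycle := by
  have h1 := hab.ne
  have h2 := hbc.ne
  have h3 := hca.ne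
  simp_all [Walk.isCycle_def, Walk.isTrail_def, Sym2.eq_iff, ne_comm]

lemma exists_other_edge {G : SimpleGraph V} {u v : V} (w : G.Walk u v)
    (hn : w.edges.Nodup) (hadj : ¬ G.Adj u v) {f : Sym2 V} (hf : f ∈ w.edges) :
    ∃ g ∈ w.edges, g ≠ f := by
  cases w with
  | nil => simp at hf
  | @cons _ x _ h q =>
    cases q with
    | nil => exact absurd h hadj
    | @cons _ y _ h' q' =>
      simp only [Walk.edges_cons, List.nodup_cons, List.mem_cons] at hn ⊢
      by_cases h1 : s(u, x) = f
      · exact ⟨s(x, y), Or.inr (Or.inl rfl), fun h2 => hn.1 (by rw [h2, h1]; exact Or.inl rfl)⟩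
      · exact ⟨s(u, x), Or.inl rfl, h1⟩

lemma first_edge_exists {G : SimpleGraph V} {u v : V} (w : G.Walk u v) (h : u ≠ v) :
    ∃ f, f ∈ w.edges := by
  cases w with
  | nil => exact absurd rfl h
  | cons h' q => exact ⟨_, List.mem_cons_self⟩

lemma isAcyclic_sup_edge {F : SimpleGraph V} (hF : F.IsAcyclic) {u v : V} (hne : u ≠ v)
    (hr : ¬ F.Reachable u v) : (F ⊔ SimpleGraph.edge u v).IsAcyclic := by
  intro a c hc
  by_cases hmem : s(u, v) ∈ c.edges
  · have hreach := (adj_and_reachable_delete_edges_iff_exists_cycle.mpr ⟨a, c, hc, hmem⟩).2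
    refine hr (hreach.mono ?_)
    rw [← edgeSet_subset_edgeSet, deleteEdges, edgeSet_sdiff, edgeSet_sup, _root_.edgeSet_edge_of_ne hne]
    intro e he
    rcases he with ⟨he1 | he1, he2⟩
    · exact he1
    · exact absurd (by rw [he1, edgeSet_fromEdgeSet]; exact ⟨rfl, by simp [hne]⟩) he2
  · have hsub : ∀ e ∈ c.edges, e ∈ F.edgeSet := by
      intro e he
      have h2 := c.edges_subset_edgeSet he
      rw [edgeSet_sup, _root_.edgeSet_edge_of_ne hne] at h2
      rcases h2 with h1 | h1
      · exact h1
      · exact absurd (h1 ▸ he) hmem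
    exact hF (c.transfer F hsub) (hc.transfer hsub)

lemma maximal_reachable {H F : SimpleGraph V} (hF : IsMaximalForest H F) {u v : V}
    (h : H.Adj u v) : F.Reachable u v := by
  by_contra hr
  have hac := isAcyclic_sup_edge hF.2.1 h.ne hr
  have heq := hF.2.2 _ (sup_le hF.1 (edge_le_of_adj h)) hac le_sup_left
  have hadj : F.Adj u v := by
    rw [← heq, sup_adj]
    exact Or.inr (by rw [SimpleGraph.edge_adj]; exact ⟨Or.inl ⟨rfl, rfl⟩, h.ne⟩)
  exact hr hadj.reachable

lemma maximal_of_reachable {H F : SimpleGraph V} (hle : F ≤ H) (hac : F.IsAcyclic)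
    (hreach : ∀ ⦃a b : V⦄, H.Adj a b → F.Reachable a b) : IsMaximalForest H F := by
  refine ⟨hle, hac, fun F' hF'le hF'ac hFF' => le_antisymm (fun a b hab => ?_) hFF'⟩
  by_cases hFab : F.Adj a b
  · exact hFab
  · exfalso
    classical
    obtain ⟨w⟩ := (hreach (hF'le hab)).symm
    set p := w.toPath with hp
    have hpe : ∀ e ∈ (p : F.Walk b a).edges, e ∈ F'.edgeSet :=
      fun e he => edgeSet_mono hFF' ((p : F.Walk b a).edges_subset_edgeSet he)
    have hq : ((p : F.Walk b a).transfer F' hpe).IsPath := p.2.transfer hpe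
    refine hF'ac _ (Path.cons_isCycle ⟨_, hq⟩ hab ?_)
    rw [Walk.edges_transfer]
    intro hmem
    exact hFab (((p : F.Walk b a).edges_subset_edgeSet hmem : _))

lemma swap_spec {H F : SimpleGraph V} (hF : IsMaximalForest H F) {u v : V} (huv : H.Adj u v)
    (he : s(u, v) ∉ F.edgeSet) {p : F.Walk u v} (hp : p.IsPath) {f : Sym2 V}
    (hf : f ∈ p.edges) :
    IsMaximalForest H (F.deleteEdges {f} ⊔ SimpleGraph.edge u v) ∧
      (F.deleteEdges {f} ⊔ SimpleGraph.edge u v).edgeSet \ F.edgeSet = {s(u, v)} ∧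
      F.edgeSet \ (F.deleteEdges {f} ⊔ SimpleGraph.edge u v).edgeSet = {f} := by
  classical
  induction f using Sym2.ind with | _ x y =>
  have hne : u ≠ v := huv.ne
  have hfF : s(x, y) ∈ F.edgeSet := p.edges_subset_edgeSet hf
  have hxy : x ≠ y := ((mem_edgeSet F).mp hfF).ne
  have hfe : s(x, y) ≠ s(u, v) := fun h => he (h ▸ hfF)
  set F' := F.deleteEdges {s(x, y)} ⊔ SimpleGraph.edge u v with hF'
  have hE : F'.edgeSet = (F.edgeSet \ {s(x, y)}) ∪ {s(u, v)} := by
    rw [hF', edgeSet_sup, edgeSet_deleteEdges, _root_.edgeSet_edge_of_ne hne]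
  -- the diff statements
  have diff1 : F'.edgeSet \ F.edgeSet = {s(u, v)} := by
    rw [hE]
    ext z
    simp only [Set.mem_diff, Set.mem_union, Set.mem_singleton_iff]
    constructor
    · rintro ⟨h1 | h1, h2⟩
      · exact absurd h1.1 h2
      · exact h1
    · rintro rfl; exact ⟨Or.inr rfl, he⟩
  have diff2 : F.edgeSet \ F'.edgeSet = {s(x, y)} := by
    rw [hE]
    ext z
    simp only [Set.mem_diff, Set.mem_union, Set.mem_singleton_iff, not_or, Set.mem_diff,
      not_and, not_not]
    constructor
    · rintro ⟨h1, h2, h3⟩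
      exact h2 h1
    · rintro rfl
      exact ⟨hfF, fun h => rfl, hfe⟩
  -- acyclicity
  have hac : F'.IsAcyclic := by
    intro a c hc
    by_cases hmem : s(u, v) ∈ c.edges
    · have hreach := (adj_and_reachable_delete_edges_iff_exists_cycle.mpr ⟨a, c, hc, hmem⟩).2
      have hle : F' \ SimpleGraph.fromEdgeSet {s(u, v)} ≤ F.deleteEdges {s(x, y)} := by
        rw [← edgeSet_subset_edgeSet, edgeSet_sdiff, hE, edgeSet_deleteEdges,
          edgeSet_fromEdgeSet]
        rintro z ⟨h1 | h1, h2⟩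
        · exact h1
        · have hz : z = s(u, v) := h1
          subst hz
          exact absurd ⟨rfl, by simp [hne]⟩ h2
      obtain ⟨w⟩ := hreach.mono hle
      have hW : ∀ e ∈ (w.toPath : (F.deleteEdges {s(x, y)}).Walk u v).edges, e ∈ F.edgeSet := by
        intro e hew
        have h3 := (w.toPath : (F.deleteEdges {s(x, y)}).Walk u v).edges_subset_edgeSet hew
        rw [edgeSet_deleteEdges] at h3
        exact h3.1
      have hq : ((w.toPath : (F.deleteEdges {s(x, y)}).Walk u v).transfer F hW).IsPath :=
        w.toPath.2.transfer hW
      have huniq := hF.2.1.path_unique ⟨p, hp⟩ ⟨_, hq⟩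
      have hpq : p = ((w.toPath : (F.deleteEdges {s(x, y)}).Walk u v).transfer F hW) :=
        congrArg Subtype.val huniq
      have hfq : s(x, y) ∈ (w.toPath : (F.deleteEdges {s(x, y)}).Walk u v).edges := by
        have h4 := hpq ▸ hf
        rwa [Walk.edges_transfer] at h4
      have := (w.toPath : (F.deleteEdges {s(x, y)}).Walk u v).edges_subset_edgeSet hfq
      rw [edgeSet_deleteEdges] at this
      exact this.2 rfl
    · have hsub : ∀ e ∈ c.edges, e ∈ F.edgeSet := by
        intro e hec
        have h2 := c.edges_subset_edgeSet hec
        rw [hE] at h2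
        rcases h2 with h1 | h1
        · exact h1.1
        · exact absurd (h1 ▸ hec) hmem
      exact hF.2.1 (c.transfer F hsub) (hc.transfer hsub)
  -- maximality
  have hxyadj : F.Adj x y := (mem_edgeSet F).mp hfF
  -- the cycle in F ⊔ edge u v containing s(x,y)
  have hple : ∀ e ∈ p.edges, e ∈ (F ⊔ SimpleGraph.edge u v).edgeSet :=
    fun e hep => edgeSet_mono le_sup_left (p.edges_subset_edgeSet hep)
  have hp' : (p.transfer _ hple).IsPath := hp.transfer hple
  have he' : (F ⊔ SimpleGraph.edge u v).Adj v u := by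
    rw [sup_adj, SimpleGraph.edge_adj]
    exact Or.inr ⟨Or.inr ⟨rfl, rfl⟩, hne.symm⟩
  have hcyc : (Walk.cons he' (p.transfer _ hple)).IsCycle := by
    refine Path.cons_isCycle ⟨_, hp'⟩ he' ?_
    rw [Walk.edges_transfer, Sym2.eq_swap]
    exact fun hm => he (p.edges_subset_edgeSet hm)
  have hfcyc : s(x, y) ∈ (Walk.cons he' (p.transfer _ hple)).edges := by
    rw [Walk.edges_cons, Walk.edges_transfer]
    exact List.mem_cons_of_mem _ hf
  have hxyr : F'.Reachable x y := by
    have hreach := (adj_and_reachable_delete_edges_iff_exists_cycle.mpr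
      ⟨v, _, hcyc, hfcyc⟩).2
    refine hreach.mono ?_
    rw [← edgeSet_subset_edgeSet, deleteEdges, edgeSet_sdiff, edgeSet_sup, _root_.edgeSet_edge_of_ne hne, hE,
      edgeSet_fromEdgeSet]
    rintro z ⟨h1 | h1, h2⟩
    · by_cases hzf : z = s(x, y)
      · exact absurd ⟨hzf, by simp [hzf, hxy]⟩ h2
      · exact Or.inl ⟨h1, hzf⟩
    · exact Or.inr h1
  have hFle' : F ≤ F' ⊔ SimpleGraph.edge x y := by
    rw [← edgeSet_subset_edgeSet, edgeSet_sup, hE, _root_.edgeSet_edge_of_ne hxy]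
    intro z hz
    by_cases hzf : z = s(x, y)
    · exact Or.inr hzf
    · exact Or.inl (Or.inl ⟨hz, hzf⟩)
  refine ⟨maximal_of_reachable (sup_le ((deleteEdges_le _).trans hF.1) (edge_le_of_adj huv))
    hac (fun a b hab => ?_), diff1, diff2⟩
  exact reachable_sup_edge hxyr (((maximal_reachable hF hab).mono hFle'))

/-- A forest graph with at least two vertices has no isolated vertices and no bridges. -/
theorem forestGraph_no_isolated_no_bridge (H : SimpleGraph V)
    (h : ∃ F₁ F₂ : {F : SimpleGraph V // IsMaximalForest H F}, F₁ ≠ F₂) :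
    (∀ F, ∃ F', (forestGraph H).Adj F F') ∧
      (∀ F F', (forestGraph H).Adj F F' → ¬ (forestGraph H).IsBridge s(F, F')) := by
  classical
  obtain ⟨F₁, F₂, hne12⟩ := h
  -- H has a cycle
  have hHnac : ¬ H.IsAcyclic := by
    intro hH
    exact hne12 (Subtype.ext ((F₁.2.2.2 H le_rfl hH F₁.2.1).symm.trans
      (F₂.2.2.2 H le_rfl hH F₂.2.1)))
  obtain ⟨a, c, hc⟩ : ∃ (a : V) (c : H.Walk a a), c.IsCycle := by
    simp only [SimpleGraph.IsAcyclic, not_forall, not_not] at hHnac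
    exact hHnac
  -- key: every maximal forest has a neighbor, obtained with full data
  have key : ∀ F : {F : SimpleGraph V // IsMaximalForest H F},
      ∃ F' : {F : SimpleGraph V // IsMaximalForest H F},
        (forestGraph H).Adj F F' := by
    intro F
    -- find an edge of the cycle not in F
    have hex : ∃ e ∈ c.edges, e ∉ F.1.edgeSet := by
      by_contra hcon
      push_neg at hcon
      exact F.2.2.1 (c.transfer F.1 hcon) (hc.transfer hcon)
    obtain ⟨e, hec, heF⟩ := hex
    revert heF
    induction e using Sym2.ind with | _ u v =>
    intro heF
    have huv : H.Adj u v := (SimpleGraph.mem_edgeSet H).mp (c.edges_subset_edgeSet hec)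
    obtain ⟨w⟩ := maximal_reachable F.2 huv
    obtain ⟨f, hfp⟩ := first_edge_exists (w.toPath : F.1.Walk u v) huv.ne
    obtain ⟨hmax, d1, d2⟩ := swap_spec F.2 huv heF w.toPath.2 hfp
    refine ⟨⟨_, hmax⟩, ?_, ?_⟩
    · rw [d2]; exact Set.encard_singleton _
    · rw [d1]; exact Set.encard_singleton _
  refine ⟨key, ?_⟩
  rintro F F' hadj hbr
  obtain ⟨f, hfd⟩ := Set.encard_eq_one.mp hadj.1
  obtain ⟨e, hed⟩ := Set.encard_eq_one.mp hadj.2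
  revert hed
  induction e using Sym2.ind with | _ u v =>
  intro hed
  have heF' : s(u, v) ∈ F'.1.edgeSet ∧ s(u, v) ∉ F.1.edgeSet := by
    exact hed.symm.subset rfl
  have hfF : f ∈ F.1.edgeSet ∧ f ∉ F'.1.edgeSet := by
    exact hfd.symm.subset rfl
  have huv : H.Adj u v := F'.2.1 ((SimpleGraph.mem_edgeSet F'.1).mp heF'.1)
  obtain ⟨w⟩ := maximal_reachable F.2 huv
  set p := w.toPath with hpdef
  have hFuv : ¬ F.1.Adj u v := fun h => heF'.2 ((SimpleGraph.mem_edgeSet F.1).mpr h)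
  -- f lies on the path p
  have hfp : f ∈ (p : F.1.Walk u v).edges := by
    by_contra hcon
    have hpe : ∀ g ∈ (p : F.1.Walk u v).edges, g ∈ F'.1.edgeSet := by
      intro g hg
      have hgF := (p : F.1.Walk u v).edges_subset_edgeSet hg
      by_contra hgF'
      exact hcon ((Set.mem_singleton_iff.mp (hfd.subset ⟨hgF, hgF'⟩)) ▸ hg)
    have hq : (((p : F.1.Walk u v).reverse).transfer F'.1
        (fun g hg => hpe g (by rwa [SimpleGraph.Walk.edges_reverse, List.mem_reverse] at hg))).IsPath :=
      (p.2.reverse).transfer _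
    refine F'.2.2.1 _ (SimpleGraph.Path.cons_isCycle ⟨_, hq⟩
      ((SimpleGraph.mem_edgeSet F'.1).mp heF'.1) ?_)
    rw [SimpleGraph.Walk.edges_transfer, SimpleGraph.Walk.edges_reverse, List.mem_reverse]
    exact fun hm => heF'.2 ((p : F.1.Walk u v).edges_subset_edgeSet hm)
  -- a second edge g on the path
  obtain ⟨g, hgp, hgf⟩ := exists_other_edge (p : F.1.Walk u v) p.2.1.edges_nodup hFuv hfp
  have hgF : g ∈ F.1.edgeSet := (p : F.1.Walk u v).edges_subset_edgeSet hgp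
  -- build the third forest
  obtain ⟨hmax, d1, d2⟩ := swap_spec F.2 huv heF'.2 p.2 hgp
  set F'' : {F : SimpleGraph V // IsMaximalForest H F} := ⟨_, hmax⟩ with hF''def
  have hA1 : (forestGraph H).Adj F F'' := by
    constructor
    · rw [d2]; exact Set.encard_singleton _
    · rw [d1]; exact Set.encard_singleton _
  -- edge set of F'
  have hE' : F'.1.edgeSet = (F.1.edgeSet \ {f}) ∪ {s(u, v)} := by
    ext z
    simp only [Set.mem_union, Set.mem_diff, Set.mem_singleton_iff]
    constructor
    · intro hz
      by_cases hzF : z ∈ F.1.edgeSet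
      · refine Or.inl ⟨hzF, fun hzf => hfF.2 (hzf ▸ hz)⟩
      · exact Or.inr (Set.mem_singleton_iff.mp (hed.subset ⟨hz, hzF⟩))
    · rintro (⟨hz1, hz2⟩ | rfl)
      · by_contra hzF'
        exact hz2 (Set.mem_singleton_iff.mp (hfd.subset ⟨hz1, hzF'⟩))
      · exact heF'.1
  have hE'' : F''.1.edgeSet = (F.1.edgeSet \ {g}) ∪ {s(u, v)} := by
    rw [hF''def]
    rw [SimpleGraph.edgeSet_sup, SimpleGraph.edgeSet_deleteEdges, _root_.edgeSet_edge_of_ne huv.ne]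
  have hfe : f ≠ s(u, v) := fun h => heF'.2 (h ▸ hfF.1)
  have hge : g ≠ s(u, v) := fun h => heF'.2 (h ▸ hgF)
  have hA2 : (forestGraph H).Adj F' F'' := by
    constructor
    · rw [hE', hE'']
      have : ((F.1.edgeSet \ {f}) ∪ {s(u, v)}) \ ((F.1.edgeSet \ {g}) ∪ {s(u, v)}) = {g} := by
        ext z
        simp only [Set.mem_diff, Set.mem_union, Set.mem_singleton_iff, not_or, Set.mem_diff,
          not_and, not_not]
        constructor
        · rintro ⟨h1 | h1, h2, h3⟩
          · exact h2 h1.1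
          · exact absurd h1 h3
        · rintro rfl
          exact ⟨Or.inl ⟨hgF, hgf⟩, fun _ => rfl, hge⟩
      rw [this]; exact Set.encard_singleton _
    · rw [hE', hE'']
      have : ((F.1.edgeSet \ {g}) ∪ {s(u, v)}) \ ((F.1.edgeSet \ {f}) ∪ {s(u, v)}) = {f} := by
        ext z
        simp only [Set.mem_diff, Set.mem_union, Set.mem_singleton_iff, not_or, Set.mem_diff,
          not_and, not_not]
        constructor
        · rintro ⟨h1 | h1, h2, h3⟩
          · exact h2 h1.1
          · exact absurd h1 h3
        · rintro rfl
          exact ⟨Or.inl ⟨hfF.1, fun h => hgf h.symm⟩, fun _ => rfl, hfe⟩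
      rw [this]; exact Set.encard_singleton _
  have hcyc := triangle_isCycle hadj hA2 hA1.symm
  rw [SimpleGraph.isBridge_iff_forall_cycle_notMem hadj] at hbr
  exact hbr _ hcyc (by simp)
end

section
/- No bipartite graph with at least 2 vertices is a forest graph: if G is bipartite and |V(G)| ≥ 2, there is no graph H with F(H) isomorphic to G. -/
open Cardinal

variable {V : Type*}

section Helpers

open SimpleGraph

lemma mem_sdiff_single {F : SimpleGraph V} {e g : Sym2 V} :
    g ∈ (F \ SimpleGraph.fromEdgeSet {e}).edgeSet ↔ g ∈ F.edgeSet ∧ g ≠ e := by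
  rw [edgeSet_sdiff, edgeSet_fromEdgeSet]
  constructor
  · rintro ⟨hg, hg2⟩
    refine ⟨hg, fun h => hg2 ⟨h, ?_⟩⟩
    exact F.not_isDiag_of_mem_edgeSet hg
  · rintro ⟨hg, hne⟩
    exact ⟨hg, fun h => hne h.1⟩

lemma mem_exch {F : SimpleGraph V} {e f g : Sym2 V} (hf : ¬f.IsDiag) :
    g ∈ ((F \ SimpleGraph.fromEdgeSet {e}) ⊔ SimpleGraph.fromEdgeSet {f}).edgeSet ↔
      (g ∈ F.edgeSet ∧ g ≠ e) ∨ g = f := by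
  rw [edgeSet_sup, Set.mem_union, mem_sdiff_single, edgeSet_fromEdgeSet]
  constructor
  · rintro (h | ⟨h, -⟩)
    · exact Or.inl h
    · exact Or.inr h
  · rintro (h | h)
    · exact Or.inl h
    · exact Or.inr ⟨h, h ▸ hf⟩

/-- Every acyclic subgraph extends to a maximal forest. -/
lemma exists_maximal_forest (H A : SimpleGraph V) (hA : A ≤ H) (hAc : A.IsAcyclic) :
    ∃ F, A ≤ F ∧ IsMaximalForest H F := by
  obtain ⟨m, hAm, hm⟩ := zorn_le_nonempty₀ {F : SimpleGraph V | F ≤ H ∧ F.IsAcyclic}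
    (fun c hcs hchain y hy => by
      refine ⟨sSup c, ⟨sSup_le fun z hz => (hcs hz).1, ?_⟩, fun z hz => le_sSup hz⟩
      intro u d hd
      have key : ∀ l : List (Sym2 V), (∀ e ∈ l, e ∈ (sSup c).edgeSet) →
          ∃ K ∈ c, ∀ e ∈ l, e ∈ K.edgeSet := by
        intro l
        induction l with
        | nil => exact fun _ => ⟨y, hy, by simp⟩
        | cons e l ih =>
          intro hl
          obtain ⟨K, hK, hKl⟩ := ih (fun e' he' => hl e' (List.mem_cons_of_mem _ he'))
          have he : e ∈ (sSup c).edgeSet := hl e (List.mem_cons_self)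
          obtain ⟨Ke, hKe, hKee⟩ : ∃ Ke ∈ c, e ∈ Ke.edgeSet := by
            clear hl hKl
            induction e using Sym2.ind with
            | _ a b =>
              rw [SimpleGraph.mem_edgeSet, SimpleGraph.sSup_adj] at he
              obtain ⟨G', hG', hab⟩ := he
              exact ⟨G', hG', (SimpleGraph.mem_edgeSet G').mpr hab⟩
          rcases hchain.total hK hKe with h | h
          · exact ⟨Ke, hKe, by
              intro e' he'
              rcases List.mem_cons.mp he' with rfl | he'
              · exact hKee
              · exact SimpleGraph.edgeSet_mono h (hKl e' he')⟩
          · exact ⟨K, hK, by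
              intro e' he'
              rcases List.mem_cons.mp he' with rfl | he'
              · exact SimpleGraph.edgeSet_mono h hKee
              · exact hKl e' he'⟩
      obtain ⟨K, hK, hKd⟩ := key d.edges (fun e he => d.edges_subset_edgeSet he)
      exact (hcs hK).2 (d.transfer K hKd) (hd.transfer hKd))
    A ⟨hA, hAc⟩
  exact ⟨m, hAm, hm.prop.1, hm.prop.2, fun F' h1 h2 h3 =>
    le_antisymm (hm.le_of_ge ⟨h1, h2⟩ h3) h3⟩

/-- The graph on the edges of a path is acyclic. -/
lemma path_acyclic {H : SimpleGraph V} : ∀ {u v : V} (p : H.Walk u v), p.IsPath →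
    (SimpleGraph.fromEdgeSet {e | e ∈ p.edges}).IsAcyclic := by
  intro u v p
  induction p with
  | nil =>
    intro _
    simp only [SimpleGraph.Walk.edges_nil, List.not_mem_nil, Set.setOf_false,
      SimpleGraph.fromEdgeSet_empty]
    exact SimpleGraph.isAcyclic_bot
  | @cons a b c hab q ih =>
    intro hp
    rw [SimpleGraph.Walk.cons_isPath_iff] at hp
    obtain ⟨hq, hans⟩ := hp
    have hBac := ih hq
    set A := SimpleGraph.fromEdgeSet {e | e ∈ (SimpleGraph.Walk.cons hab q).edges} with hA
    set B := SimpleGraph.fromEdgeSet {e | e ∈ q.edges} with hB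
    intro w d hd
    have hAedge : ∀ g ∈ A.edgeSet, g = s(a, b) ∨ g ∈ B.edgeSet := by
      intro g hg
      rw [hA, SimpleGraph.edgeSet_fromEdgeSet] at hg
      obtain ⟨hg1, hg2⟩ := hg
      rw [Set.mem_setOf_eq, SimpleGraph.Walk.edges_cons, List.mem_cons] at hg1
      rcases hg1 with h | h
      · exact Or.inl h
      · exact Or.inr (by rw [hB, SimpleGraph.edgeSet_fromEdgeSet]; exact ⟨h, hg2⟩)
    have hBa : ∀ z : V, ¬B.Adj a z := by
      intro z hz
      rw [hB, SimpleGraph.fromEdgeSet_adj] at hz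
      exact hans (q.fst_mem_support_of_mem_edges hz.1)
    by_cases hmem : s(a, b) ∈ d.edges
    · obtain ⟨-, hr⟩ := (adj_and_reachable_delete_edges_iff_exists_cycle (G := A)).mpr
        ⟨w, d, hd, hmem⟩
      have hle : A \ SimpleGraph.fromEdgeSet {s(a, b)} ≤ B := by
        rw [← SimpleGraph.edgeSet_subset_edgeSet]
        intro g hg
        rw [SimpleGraph.edgeSet_sdiff] at hg
        obtain ⟨hg1, hg2⟩ := hg
        rw [SimpleGraph.edgeSet_fromEdgeSet] at hg2
        rcases hAedge g hg1 with rfl | h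
        · exact absurd ⟨rfl, A.not_isDiag_of_mem_edgeSet hg1⟩ hg2
        · exact h
      obtain ⟨W⟩ := hr.mono hle
      cases W with
      | nil => exact hab.ne rfl
      | cons h W' => exact hBa _ h
    · have hedges : ∀ g ∈ d.edges, g ∈ B.edgeSet := by
        intro g hg
        rcases hAedge g (d.edges_subset_edgeSet hg) with rfl | h
        · exact absurd hg hmem
        · exact h
      exact hBac (d.transfer B hedges) (hd.transfer hedges)

lemma no_cycle {F : SimpleGraph V} (hF : F.IsAcyclic) {x y : V} (hxy : F.Adj x y)
    (hr : (F \ SimpleGraph.fromEdgeSet {s(x, y)}).Reachable x y) : False := by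
  obtain ⟨u', d', hd', -⟩ :=
    (adj_and_reachable_delete_edges_iff_exists_cycle (G := F)).mp ⟨hxy, hr⟩
  exact hF d' hd'

/-- The exchange lemma: swapping an edge of a maximal forest for a suitable
non-edge yields another maximal forest. -/
lemma exchange {H F : SimpleGraph V} (hF : IsMaximalForest H F) {v w x y : V}
    (hvw : H.Adj v w) (hxy : F.Adj x y) (h1 : s(v, w) ∉ F.edgeSet)
    (hwx : (F \ SimpleGraph.fromEdgeSet {s(x, y)}).Reachable w x)
    (hvy : (F \ SimpleGraph.fromEdgeSet {s(x, y)}).Reachable v y) :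
    IsMaximalForest H
      ((F \ SimpleGraph.fromEdgeSet {s(x, y)}) ⊔ SimpleGraph.fromEdgeSet {s(v, w)}) := by
  obtain ⟨hFH, hFac, hFmax⟩ := hF
  set e1 := s(v, w) with he1
  set e2 := s(x, y) with he2
  have he1d : ¬e1.IsDiag := by rw [he1, Sym2.mk_isDiag_iff]; exact hvw.ne
  have he2F : e2 ∈ F.edgeSet := hxy
  set K := F \ SimpleGraph.fromEdgeSet {e2} with hK
  set F₂ := K ⊔ SimpleGraph.fromEdgeSet {e1} with hF₂
  have hmem₂ : ∀ g : Sym2 V, g ∈ F₂.edgeSet ↔ (g ∈ F.edgeSet ∧ g ≠ e2) ∨ g = e1 :=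
    fun g => mem_exch he1d
  have hKle : ∀ (G' : SimpleGraph V), (∀ g ∈ K.edgeSet, g ∈ G'.edgeSet) → K ≤ G' :=
    fun G' h => SimpleGraph.edgeSet_subset_edgeSet.mp h
  refine ⟨?_, ?_, ?_⟩
  · rw [← SimpleGraph.edgeSet_subset_edgeSet]
    intro g hg
    rcases (hmem₂ g).mp hg with ⟨hgF, -⟩ | rfl
    · exact SimpleGraph.edgeSet_mono hFH hgF
    · exact hvw
  · intro u d hd
    by_cases hmem : e1 ∈ d.edges
    · obtain ⟨-, hr⟩ := (adj_and_reachable_delete_edges_iff_exists_cycle (G := F₂)).mpr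
        ⟨u, d, hd, hmem⟩
      have hle : F₂ \ SimpleGraph.fromEdgeSet {e1} ≤ K := by
        rw [← SimpleGraph.edgeSet_subset_edgeSet]
        intro g hg
        rw [mem_sdiff_single] at hg
        obtain ⟨hg1, hg2⟩ := hg
        rcases (hmem₂ g).mp hg1 with h | rfl
        · exact mem_sdiff_single.mpr h
        · exact absurd rfl hg2
      have hKvw : K.Reachable v w := hr.mono hle
      exact no_cycle hFac hxy ((hwx.symm.trans hKvw.symm).trans hvy)
    · have hedges : ∀ g ∈ d.edges, g ∈ F.edgeSet := by
        intro g hg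
        rcases (hmem₂ g).mp (d.edges_subset_edgeSet hg) with ⟨h, -⟩ | rfl
        · exact h
        · exact absurd hg hmem
      exact hFac (d.transfer F hedges) (hd.transfer hedges)
  · intro F' hF'H hF'ac hle
    have he1F' : e1 ∈ F'.edgeSet :=
      SimpleGraph.edgeSet_mono hle ((hmem₂ e1).mpr (Or.inr rfl))
    have hKF' : K ≤ F' := le_trans le_sup_left hle
    have he2F' : e2 ∉ F'.edgeSet := by
      intro he2'
      have hle2 : K ≤ F' \ SimpleGraph.fromEdgeSet {e2} := by
        refine hKle _ fun g hg => ?_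
        rw [mem_sdiff_single] at hg ⊢
        exact ⟨SimpleGraph.edgeSet_mono hKF' (mem_sdiff_single.mpr hg), hg.2⟩
      have hadjvw : (F' \ SimpleGraph.fromEdgeSet {e2}).Adj v w := by
        have : e1 ∈ (F' \ SimpleGraph.fromEdgeSet {e2}).edgeSet :=
          mem_sdiff_single.mpr ⟨he1F', fun h => h1 (h ▸ he2F)⟩
        exact this
      exact no_cycle hF'ac (F'.mem_edgeSet.mp he2')
        ((hwx.symm.mono hle2).trans ((hadjvw.symm.reachable).trans (hvy.mono hle2)))
    set F'' := (F' \ SimpleGraph.fromEdgeSet {e1}) ⊔ SimpleGraph.fromEdgeSet {e2} with hF''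
    have he2d : ¬e2.IsDiag := F.not_isDiag_of_mem_edgeSet he2F
    have hmem'' : ∀ g : Sym2 V, g ∈ F''.edgeSet ↔ (g ∈ F'.edgeSet ∧ g ≠ e1) ∨ g = e2 :=
      fun g => mem_exch he2d
    have hFF'' : F ≤ F'' := by
      rw [← SimpleGraph.edgeSet_subset_edgeSet]
      intro g hg
      by_cases hge2 : g = e2
      · exact (hmem'' g).mpr (Or.inr hge2)
      · refine (hmem'' g).mpr (Or.inl ⟨SimpleGraph.edgeSet_mono hKF'
          (mem_sdiff_single.mpr ⟨hg, hge2⟩), ?_⟩)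
        intro h
        exact h1 (h ▸ hg)
    have hF''H : F'' ≤ H := by
      rw [← SimpleGraph.edgeSet_subset_edgeSet]
      intro g hg
      rcases (hmem'' g).mp hg with ⟨h, -⟩ | rfl
      · exact SimpleGraph.edgeSet_mono hF'H h
      · exact SimpleGraph.edgeSet_mono hFH he2F
    have hF''ac : F''.IsAcyclic := by
      intro u d hd
      by_cases hmem : e2 ∈ d.edges
      · obtain ⟨-, hr⟩ := (adj_and_reachable_delete_edges_iff_exists_cycle (G := F'')).mpr
          ⟨u, d, hd, hmem⟩
        set L := F' \ SimpleGraph.fromEdgeSet {e1} with hL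
        have hle' : F'' \ SimpleGraph.fromEdgeSet {e2} ≤ L := by
          rw [← SimpleGraph.edgeSet_subset_edgeSet]
          intro g hg
          rw [mem_sdiff_single] at hg
          obtain ⟨hg1, hg2⟩ := hg
          rcases (hmem'' g).mp hg1 with h | rfl
          · exact mem_sdiff_single.mpr h
          · exact absurd rfl hg2
        have hKL : K ≤ L := by
          refine hKle _ fun g hg => ?_
          rw [mem_sdiff_single] at hg ⊢
          refine ⟨SimpleGraph.edgeSet_mono hKF' (mem_sdiff_single.mpr hg), ?_⟩
          intro h
          exact h1 (h ▸ hg.1)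
        have hLxy : L.Reachable x y := hr.mono hle'
        have hLvw : L.Reachable v w :=
          ((hvy.mono hKL).trans hLxy.symm).trans (hwx.symm.mono hKL)
        exact no_cycle hF'ac (F'.mem_edgeSet.mp he1F') hLvw
      · have hedges : ∀ g ∈ d.edges, g ∈ F'.edgeSet := by
          intro g hg
          rcases (hmem'' g).mp (d.edges_subset_edgeSet hg) with ⟨h, -⟩ | rfl
          · exact h
          · exact absurd hg hmem
        exact hF'ac (d.transfer F' hedges) (hd.transfer hedges)
    have hF''F : F'' = F := hFmax F'' hF''H hF''ac hFF''
    refine le_antisymm ?_ hle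
    rw [← SimpleGraph.edgeSet_subset_edgeSet]
    intro g hg
    by_cases hge1 : g = e1
    · exact (hmem₂ g).mpr (Or.inr hge1)
    · have : g ∈ F''.edgeSet := (hmem'' g).mpr (Or.inl ⟨hg, hge1⟩)
      rw [hF''F] at this
      refine (hmem₂ g).mpr (Or.inl ⟨this, ?_⟩)
      intro h
      exact he2F' (h ▸ hg)

end Helpers

/-- No bipartite graph with at least two vertices is a forest graph. -/
theorem bipartite_no_root {W : Type*} (G : SimpleGraph V)
    (hbip : G.Colorable 2) (hcard : ∃ v w : V, v ≠ w) (H : SimpleGraph W) :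
    ¬ Nonempty (forestGraph H ≃g G) := by
  rintro ⟨e⟩
  obtain ⟨v0, w0, hvw0⟩ := hcard
  by_cases hH : H.IsAcyclic
  · -- all maximal forests equal `H`, so the vertex type is a subsingleton
    have hsub : ∀ a : {F : SimpleGraph W // IsMaximalForest H F}, a.1 = H := by
      rintro ⟨F, hFH, hFac, hmax⟩
      exact (hmax H le_rfl hH hFH).symm
    have heq : e.symm v0 = e.symm w0 := Subtype.ext (by rw [hsub, hsub])
    exact hvw0 (by rw [← e.apply_symm_apply v0, ← e.apply_symm_apply w0, heq])
  · simp only [SimpleGraph.IsAcyclic] at hH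
    push_neg at hH
    obtain ⟨v, c, hc⟩ := hH
    cases c with
    | nil => exact absurd rfl hc.ne_nil
    | cons h1 p =>
      rename_i w
      cases p with
      | nil => exact absurd h1 H.irrefl
      | cons h2 q =>
        rename_i x
        cases q with
        | nil =>
          have := hc.three_le_length
          simp [SimpleGraph.Walk.length_cons] at this
        | cons h3 r =>
          rename_i y
          have hc' := hc
          rw [SimpleGraph.Walk.cons_isCycle_iff] at hc
          obtain ⟨hp, he1p⟩ := hc
          set p := SimpleGraph.Walk.cons h2 (SimpleGraph.Walk.cons h3 r) with hpdef
          set e1 := s(v, w) with he1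
          set e2 := s(w, x) with he2
          set e3 := s(x, y) with he3
          have hnd := hp.edges_nodup
          rw [hpdef, SimpleGraph.Walk.edges_cons, SimpleGraph.Walk.edges_cons,
            List.nodup_cons, List.nodup_cons] at hnd
          have he23 : e2 ≠ e3 := by
            intro h
            apply hnd.1
            rw [← he2, h, he3]
            exact List.mem_cons_self
          have he2r : e2 ∉ r.edges := fun h => hnd.1 (List.mem_cons_of_mem _ h)
          have he3r : e3 ∉ r.edges := hnd.2.1
          set A := SimpleGraph.fromEdgeSet {g : Sym2 W | g ∈ p.edges} with hAdef
          have hAH : A ≤ H := by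
            rw [← SimpleGraph.edgeSet_subset_edgeSet]
            intro g hg
            rw [hAdef, SimpleGraph.edgeSet_fromEdgeSet] at hg
            exact p.edges_subset_edgeSet hg.1
          obtain ⟨F, hAF, hFm⟩ := exists_maximal_forest H A hAH (path_acyclic p hp)
          have hsubA : ∀ g ∈ p.edges, g ∈ F.edgeSet := by
            intro g hg
            refine SimpleGraph.edgeSet_mono hAF ?_
            rw [hAdef, SimpleGraph.edgeSet_fromEdgeSet]
            exact ⟨hg, H.not_isDiag_of_mem_edgeSet (p.edges_subset_edgeSet hg)⟩
          have hpe : p.edges = e2 :: e3 :: r.edges := by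
            rw [hpdef, SimpleGraph.Walk.edges_cons, SimpleGraph.Walk.edges_cons]
          have he2F : e2 ∈ F.edgeSet := hsubA e2 (by rw [hpe]; exact List.mem_cons_self)
          have he3F : e3 ∈ F.edgeSet := hsubA e3
            (by rw [hpe]; exact List.mem_cons_of_mem _ (List.mem_cons_self))
          have hrF : ∀ g ∈ r.edges, g ∈ F.edgeSet := fun g hg => hsubA g
            (by rw [hpe]; exact List.mem_cons_of_mem _ (List.mem_cons_of_mem _ hg))
          have he1F : e1 ∉ F.edgeSet := by
            intro hin
            have hedges : ∀ g ∈ (SimpleGraph.Walk.cons h1 p).edges, g ∈ F.edgeSet := by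
              intro g hg
              rw [SimpleGraph.Walk.edges_cons, List.mem_cons] at hg
              rcases hg with rfl | hg
              · exact hin
              · exact hsubA g hg
            exact hFm.2.1 _ (hc'.transfer hedges)
          have he12 : e1 ≠ e2 := fun h => he1F (h ▸ he2F)
          have he13 : e1 ≠ e3 := fun h => he1F (h ▸ he3F)
          -- the two exchanged forests
          have hF₂m : IsMaximalForest H
              ((F \ SimpleGraph.fromEdgeSet {e2}) ⊔ SimpleGraph.fromEdgeSet {e1}) := by
            refine exchange hFm h1 (F.mem_edgeSet.mp he2F) he1F (SimpleGraph.Reachable.refl _) ?_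
            have hqK : ∀ g ∈ (SimpleGraph.Walk.cons h3 r).edges,
                g ∈ (F \ SimpleGraph.fromEdgeSet {e2}).edgeSet := by
              intro g hg
              rw [SimpleGraph.Walk.edges_cons, List.mem_cons] at hg
              refine mem_sdiff_single.mpr ?_
              rcases hg with rfl | hg
              · exact ⟨he3F, fun h => he23 h.symm⟩
              · exact ⟨hrF g hg, fun h => he2r (h ▸ hg)⟩
            exact (SimpleGraph.Reachable.symm
              ⟨(SimpleGraph.Walk.cons h3 r).transfer _ hqK⟩)
          have hF₃m : IsMaximalForest H
              ((F \ SimpleGraph.fromEdgeSet {e3}) ⊔ SimpleGraph.fromEdgeSet {e1}) := by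
            refine exchange hFm h1 (F.mem_edgeSet.mp he3F) he1F ?_ ?_
            · have : s(w, x) ∈ (F \ SimpleGraph.fromEdgeSet {e3}).edgeSet :=
                mem_sdiff_single.mpr ⟨he2F, he23⟩
              exact (SimpleGraph.mem_edgeSet _).mp this |>.reachable
            · have hrK : ∀ g ∈ r.edges, g ∈ (F \ SimpleGraph.fromEdgeSet {e3}).edgeSet := by
                intro g hg
                exact mem_sdiff_single.mpr ⟨hrF g hg, fun h => he3r (h ▸ hg)⟩
              exact (SimpleGraph.Reachable.symm ⟨r.transfer _ hrK⟩)
          set F₂ := (F \ SimpleGraph.fromEdgeSet {e2}) ⊔ SimpleGraph.fromEdgeSet {e1} with hF₂def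
          set F₃ := (F \ SimpleGraph.fromEdgeSet {e3}) ⊔ SimpleGraph.fromEdgeSet {e1} with hF₃def
          have he1d : ¬e1.IsDiag := by rw [he1, Sym2.mk_isDiag_iff]; exact h1.ne
          have hm₂ : ∀ g : Sym2 W, g ∈ F₂.edgeSet ↔ (g ∈ F.edgeSet ∧ g ≠ e2) ∨ g = e1 :=
            fun g => mem_exch he1d
          have hm₃ : ∀ g : Sym2 W, g ∈ F₃.edgeSet ↔ (g ∈ F.edgeSet ∧ g ≠ e3) ∨ g = e1 :=
            fun g => mem_exch he1d
          have hd1 : F.edgeSet \ F₂.edgeSet = {e2} := by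
            ext g
            simp only [Set.mem_diff, hm₂, Set.mem_singleton_iff]
            constructor
            · rintro ⟨hg, hng⟩
              by_contra hne
              exact hng (Or.inl ⟨hg, hne⟩)
            · rintro rfl
              exact ⟨he2F, by rintro (⟨-, h⟩ | h); exact h rfl; exact he12 h.symm⟩
          have hd2 : F₂.edgeSet \ F.edgeSet = {e1} := by
            ext g
            simp only [Set.mem_diff, hm₂, Set.mem_singleton_iff]
            constructor
            · rintro ⟨⟨hg, -⟩ | rfl, hng⟩
              · exact absurd hg hng
              · rfl
            · rintro rfl
              exact ⟨Or.inr rfl, he1F⟩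
          have hd3 : F.edgeSet \ F₃.edgeSet = {e3} := by
            ext g
            simp only [Set.mem_diff, hm₃, Set.mem_singleton_iff]
            constructor
            · rintro ⟨hg, hng⟩
              by_contra hne
              exact hng (Or.inl ⟨hg, hne⟩)
            · rintro rfl
              exact ⟨he3F, by rintro (⟨-, h⟩ | h); exact h rfl; exact he13 h.symm⟩
          have hd4 : F₃.edgeSet \ F.edgeSet = {e1} := by
            ext g
            simp only [Set.mem_diff, hm₃, Set.mem_singleton_iff]
            constructor
            · rintro ⟨⟨hg, -⟩ | rfl, hng⟩
              · exact absurd hg hng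
              · rfl
            · rintro rfl
              exact ⟨Or.inr rfl, he1F⟩
          have hd5 : F₂.edgeSet \ F₃.edgeSet = {e3} := by
            ext g
            simp only [Set.mem_diff, hm₂, hm₃, Set.mem_singleton_iff]
            constructor
            · rintro ⟨⟨hg, hg2⟩ | rfl, hng⟩
              · by_contra hne
                exact hng (Or.inl ⟨hg, hne⟩)
              · exact absurd (Or.inr rfl) hng
            · rintro rfl
              exact ⟨Or.inl ⟨he3F, fun h => he23 h.symm⟩,
                by rintro (⟨-, h⟩ | h); exact h rfl; exact he13 h.symm⟩
          have hd6 : F₃.edgeSet \ F₂.edgeSet = {e2} := by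
            ext g
            simp only [Set.mem_diff, hm₂, hm₃, Set.mem_singleton_iff]
            constructor
            · rintro ⟨⟨hg, hg3⟩ | rfl, hng⟩
              · by_contra hne
                exact hng (Or.inl ⟨hg, hne⟩)
              · exact absurd (Or.inr rfl) hng
            · rintro rfl
              exact ⟨Or.inl ⟨he2F, he23⟩,
                by rintro (⟨-, h⟩ | h); exact h rfl; exact he12 h.symm⟩
          -- a triangle in the forest graph
          set a : {F : SimpleGraph W // IsMaximalForest H F} := ⟨F, hFm⟩
          set b : {F : SimpleGraph W // IsMaximalForest H F} := ⟨F₂, hF₂m⟩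
          set d : {F : SimpleGraph W // IsMaximalForest H F} := ⟨F₃, hF₃m⟩
          have hab : (forestGraph H).Adj a b :=
            ⟨by rw [hd1]; exact Set.encard_singleton _,
             by rw [hd2]; exact Set.encard_singleton _⟩
          have had : (forestGraph H).Adj a d :=
            ⟨by rw [hd3]; exact Set.encard_singleton _,
             by rw [hd4]; exact Set.encard_singleton _⟩
          have hbd : (forestGraph H).Adj b d :=
            ⟨by rw [hd5]; exact Set.encard_singleton _,
             by rw [hd6]; exact Set.encard_singleton _⟩
          obtain ⟨C⟩ := hbip
          have h12 := C.valid (e.map_rel_iff.mpr hab)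
          have h13 := C.valid (e.map_rel_iff.mpr had)
          have h23 := C.valid (e.map_rel_iff.mpr hbd)
          have i1 := (C (e a)).isLt
          have i2 := (C (e b)).isLt
          have i3 := (C (e d)).isLt
          rw [Fin.ne_iff_vne] at h12 h13 h23
          omega
end
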